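/- arXiv:1705.08163 — 11 statements merged into one kernel-verified Lean document; each statement's English description precedes it below -/
import Mathlib

section
/- Let f : [0,∞) → ℝ be continuous with f(0) ≥ 0. Define a(t) = max(0, max_{s ≤ t} (−f(s))) and x(t) = a(t) + f(t). Then (a, x) is a Skorokhod decomposition of f: a is continuous, nondecreasing, a(0) = 0, x is continuous, nonnegative, x(0) = f(0), and a is locally constant on the open set {t : x(t) > 0}. -/
open Set Filter MeasureTheory

/-- An admissible pair `(b, y)` for a continuous `f : [0,∞) → ℝ` with `f 0 ≥ 0`:
`b` continuous nondecreasing, `y` continuous nonnegative, `y = b + f`, `y 0 = f 0`. -/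
def AdmissiblePair (f b y : ℝ → ℝ) : Prop :=
  ContinuousOn b (Set.Ici 0) ∧ ContinuousOn y (Set.Ici 0) ∧
  MonotoneOn b (Set.Ici 0) ∧ (∀ t ∈ Set.Ici (0:ℝ), 0 ≤ y t) ∧
  (∀ t ∈ Set.Ici (0:ℝ), y t = b t + f t) ∧ y 0 = f 0

/-- A Skorokhod decomposition `(a, x)` of `f`: an admissible pair with `a`
locally constant on `{t : x t > 0}`. -/
def SkorokhodDecomp (f a x : ℝ → ℝ) : Prop :=
  AdmissiblePair f a x ∧
  ∀ t ∈ Set.Ici (0:ℝ), 0 < x t → ∀ᶠ s in nhdsWithin t (Set.Ici 0), a s = a t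

/-- An approximate `(β, υ)` decomposition of `f`: an admissible pair `(b, y)`
such that whenever `y ≥ υ` on `[s, u]`, `b u - b s ≤ β (u - s)`. -/
def ApproxDecomp (β υ : ℝ) (f b y : ℝ → ℝ) : Prop :=
  AdmissiblePair f b y ∧
  ∀ s u : ℝ, 0 ≤ s → s ≤ u → (∀ t ∈ Set.Icc s u, υ ≤ y t) → b u - b s ≤ β * (u - s)

/-- A point between two points that are `δ`-close to `t` is itself `δ`-close to `t`. -/
lemma skorokhod_between_dist {p q r t δ : ℝ} (hpr : p ≤ r) (hrq : r ≤ q)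
    (hp : dist p t < δ) (hq : dist q t < δ) : dist r t < δ := by
  rw [Real.dist_eq, abs_sub_lt_iff]
  rw [Real.dist_eq] at hp hq
  constructor
  · calc r - t ≤ q - t := by linarith
      _ ≤ |q - t| := le_abs_self _
      _ < δ := hq
  · calc t - r ≤ t - p := by linarith
      _ ≤ |t - p| := le_abs_self _
      _ = |p - t| := abs_sub_comm _ _
      _ < δ := hp

/-- `a t = max 0 (max_{s ≤ t} (-f s))`, `x = a + f` is a Skorokhod
decomposition of `f`, with `a 0 = 0`. -/
theorem skorokhod_existence (f : ℝ → ℝ) (hf : ContinuousOn f (Set.Ici 0)) (hf0 : 0 ≤ f 0)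
    (a x : ℝ → ℝ)
    (ha : ∀ t, a t = max 0 (sSup ((fun s => -f s) '' Set.Icc 0 t)))
    (hx : ∀ t, x t = a t + f t) :
    SkorokhodDecomp f a x ∧ a 0 = 0 := by
  set g : ℝ → ℝ := fun s => -f s with hgdef
  have hg : ContinuousOn g (Set.Ici 0) := hf.neg
  have hsub : ∀ s u : ℝ, 0 ≤ s → Set.Icc s u ⊆ Set.Ici 0 := fun s u hs r hr => hs.trans hr.1
  have hbdd : ∀ s u : ℝ, 0 ≤ s → BddAbove (g '' Set.Icc s u) := fun s u hs =>
    (isCompact_Icc.image_of_continuousOn (hg.mono (hsub s u hs))).bddAbove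
  have hne : ∀ s u : ℝ, s ≤ u → (g '' Set.Icc s u).Nonempty :=
    fun s u h => (Set.nonempty_Icc.2 h).image g
  have hga : ∀ t : ℝ, 0 ≤ t → g t ≤ a t := by
    intro t ht
    rw [ha t]
    exact le_max_of_le_right (le_csSup (hbdd 0 t le_rfl) ⟨t, ⟨ht, le_rfl⟩, rfl⟩)
  have ha_nonneg : ∀ t, 0 ≤ a t := fun t => (ha t) ▸ le_max_left _ _
  have ha0 : a 0 = 0 := by
    rw [ha 0, Set.Icc_self, Set.image_singleton, csSup_singleton]
    exact max_eq_left (neg_nonpos.mpr hf0)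
  have hmono : MonotoneOn a (Set.Ici 0) := by
    intro s hs t ht hst
    rw [ha s, ha t]
    exact max_le_max le_rfl (csSup_le_csSup (hbdd 0 t le_rfl) (hne 0 s hs)
      (Set.image_mono (Set.Icc_subset_Icc le_rfl hst)))
  have hkey : ∀ s u : ℝ, 0 ≤ s → s ≤ u →
      a u ≤ max (a s) (max 0 (sSup (g '' Set.Icc s u))) := by
    intro s u hs hsu
    rw [ha u, ha s]
    have hunion : Set.Icc 0 s ∪ Set.Icc s u = Set.Icc 0 u := Set.Icc_union_Icc_eq_Icc hs hsu
    rw [← hunion, Set.image_union,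
      csSup_union (hbdd 0 s le_rfl) (hne 0 s hs) (hbdd s u hs) (hne s u hsu)]
    apply max_le
    · exact le_max_of_le_left (le_max_left _ _)
    · exact max_le_max (le_max_right _ _) (le_max_right _ _)
  have hSle : ∀ s u c : ℝ, s ≤ u → (∀ r ∈ Set.Icc s u, g r ≤ c) →
      sSup (g '' Set.Icc s u) ≤ c := by
    intro s u c hsu h
    apply csSup_le (hne s u hsu)
    rintro y ⟨r, hr, rfl⟩
    exact h r hr
  -- continuity of a on Ici 0
  have hcont : ContinuousOn a (Set.Ici 0) := by
    intro t ht
    rw [Metric.continuousWithinAt_iff]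
    intro ε hε
    have hft := hf t ht
    rw [Metric.continuousWithinAt_iff] at hft
    obtain ⟨δ, hδ, hδ'⟩ := hft (ε/3) (by positivity)
    refine ⟨δ, hδ, ?_⟩
    intro s hs hst
    have hstep : ∀ p q : ℝ, 0 ≤ p → p ≤ q → dist p t < δ → dist q t < δ →
        a q ≤ a p + 2*ε/3 := by
      intro p q hp hpq hpd hqd
      have hS : sSup (g '' Set.Icc p q) ≤ a p + 2*ε/3 := by
        apply hSle p q _ hpq
        intro r hr
        have hr0 : (0:ℝ) ≤ r := hp.trans hr.1
        have hrd : dist r t < δ := skorokhod_between_dist hr.1 hr.2 hpd hqd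
        have h1 : |f r - f t| < ε/3 := by
          have := hδ' hr0 hrd
          rwa [Real.dist_eq] at this
        have h2 : |f p - f t| < ε/3 := by
          have := hδ' hp hpd
          rwa [Real.dist_eq] at this
        have h3 := hga p hp
        rw [abs_sub_lt_iff] at h1 h2
        simp only [hgdef] at h3 ⊢
        linarith [h1.1, h1.2, h2.1, h2.2]
      calc a q ≤ max (a p) (max 0 (sSup (g '' Set.Icc p q))) := hkey p q hp hpq
        _ ≤ a p + 2*ε/3 := by
            apply max_le (by linarith)
            exact max_le (by linarith [ha_nonneg p]) hS
    have hdtt : dist t t < δ := by simpa using hδ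
    rcases le_total s t with h | h
    · have h1 := hmono hs ht h
      have h2 := hstep s t hs h hst hdtt
      rw [Real.dist_eq, abs_sub_lt_iff]
      constructor <;> linarith
    · have h1 := hmono ht hs h
      have h2 := hstep t s ht h hdtt hst
      rw [Real.dist_eq, abs_sub_lt_iff]
      constructor <;> linarith
  -- local constancy on {x > 0}
  have hloc : ∀ t ∈ Set.Ici (0:ℝ), 0 < x t → ∀ᶠ s in nhdsWithin t (Set.Ici 0), a s = a t := by
    intro t ht hxt
    rw [hx t] at hxt
    set c : ℝ := (g t + a t)/2 with hc
    have hgt : g t < a t := by simp only [hgdef]; linarith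
    have hgc : g t < c := by rw [hc]; linarith
    have hclt : c < a t := by rw [hc]; linarith
    have hev : ∀ᶠ s in nhdsWithin t (Set.Ici 0), g s < c :=
      Filter.Tendsto.eventually_lt_const hgc (hg t ht)
    obtain ⟨δ, hδ, hδ'⟩ := Metric.mem_nhdsWithin_iff.mp hev
    rw [eventually_iff, Metric.mem_nhdsWithin_iff]
    refine ⟨δ, hδ, ?_⟩
    rintro s ⟨hsball, hs0⟩
    simp only [Set.mem_setOf_eq]
    have hsb : dist s t < δ := Metric.mem_ball.mp hsball
    have hdtt : dist t t < δ := by simpa using hδ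
    have hbet : ∀ p q : ℝ, 0 ≤ p → dist p t < δ → dist q t < δ → p ≤ q →
        sSup (g '' Set.Icc p q) ≤ c := by
      intro p q hp hpd hqd hpq
      apply hSle p q c hpq
      intro r hr
      have hr0 : (0:ℝ) ≤ r := hp.trans hr.1
      have hrd : dist r t < δ := skorokhod_between_dist hr.1 hr.2 hpd hqd
      exact le_of_lt (hδ' ⟨Metric.mem_ball.mpr hrd, hr0⟩)
    rcases le_total s t with h | h
    · refine le_antisymm (hmono hs0 ht h) ?_
      have hk := hkey s t hs0 h
      have hS := hbet s t hs0 hsb hdtt h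
      have hle : a t ≤ max (a s) c := by
        refine hk.trans (max_le (le_max_left _ _) ?_)
        exact max_le (le_max_of_le_left (ha_nonneg s)) (le_max_of_le_right hS)
      rcases le_max_iff.mp hle with h' | h'
      · exact h'
      · linarith
    · refine le_antisymm ?_ (hmono ht hs0 h)
      have hk := hkey t s ht h
      have hS := hbet t s ht hdtt hsb h
      refine hk.trans (max_le le_rfl (max_le (ha_nonneg t) (hS.trans hclt.le)))
  have hxcont : ContinuousOn x (Set.Ici 0) := (hcont.add hf).congr fun t _ => hx t
  have hxnn : ∀ t ∈ Set.Ici (0:ℝ), 0 ≤ x t := by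
    intro t ht
    rw [hx t]
    have := hga t ht
    simp only [hgdef] at this
    linarith
  have hx0 : x 0 = f 0 := by rw [hx 0, ha0, zero_add]
  exact ⟨⟨⟨hcont, hxcont, hmono, hxnn, fun t _ => hx t, hx0⟩, hloc⟩, ha0⟩
end

section
/- Let f : [0,∞) → ℝ be continuous with f(0) ≥ 0, let (a, x) be a Skorokhod decomposition of f, and let (b, y) be any admissible pair for f. Then b(t) − a(t) = y(t) − x(t) ≥ 0 for all t ≥ 0, i.e. each component of the Skorokhod decomposition is pointwise dominated by the corresponding component of any admissible pair. -/
open Set Filter MeasureTheory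

/-- the Skorokhod decomposition is dominated by any admissible pair. -/
theorem skorokhod_minimal (f a x b y : ℝ → ℝ)
    (hf : ContinuousOn f (Set.Ici 0)) (hf0 : 0 ≤ f 0)
    (hsk : SkorokhodDecomp f a x) (hadm : AdmissiblePair f b y) :
    ∀ t ∈ Set.Ici (0:ℝ), b t - a t = y t - x t ∧ 0 ≤ b t - a t := by
  obtain ⟨⟨ha_cont, hx_cont, ha_mono, hx_nn, hx_eq, hx0⟩, hloc⟩ := hsk
  obtain ⟨hb_cont, hy_cont, hb_mono, hy_nn, hy_eq, hy0⟩ := hadm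
  have ha0 : a 0 = 0 := by have := hx_eq 0 Set.self_mem_Ici; linarith
  have hb0 : b 0 = 0 := by have := hy_eq 0 Set.self_mem_Ici; linarith
  intro t ht
  have heq : b t - a t = y t - x t := by
    have h1 := hx_eq t ht; have h2 := hy_eq t ht; linarith
  refine ⟨heq, ?_⟩
  by_contra hneg
  push_neg at hneg
  -- g = b - a = y - x
  have hgeq : ∀ u ∈ Set.Ici (0:ℝ), b u - a u = y u - x u := by
    intro u hu
    have h1 := hx_eq u hu; have h2 := hy_eq u hu; linarith
  have hg_cont : ContinuousOn (fun u => b u - a u) (Set.Ici 0) := hb_cont.sub ha_cont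
  set S := {u : ℝ | u ∈ Set.Icc 0 t ∧ 0 ≤ b u - a u} with hSdef
  have h0S : (0:ℝ) ∈ S := ⟨⟨le_refl 0, ht⟩, by simp [ha0, hb0]⟩
  have hbdd : BddAbove S := ⟨t, fun u hu => hu.1.2⟩
  have hSclosed : IsClosed S := by
    have : S = Set.Icc 0 t ∩ (fun u => b u - a u) ⁻¹' Set.Ici 0 := by
      ext u; simp [hSdef, Set.mem_Icc, and_comm]
    rw [this]
    exact ContinuousOn.preimage_isClosed_of_isClosed
      (hg_cont.mono (Set.Icc_subset_Ici_self)) isClosed_Icc isClosed_Ici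
  set c := sSup S with hcdef
  have hcS : c ∈ S := hSclosed.csSup_mem ⟨0, h0S⟩ hbdd
  have hc0 : 0 ≤ c := hcS.1.1
  have hct' : c ≤ t := hcS.1.2
  have hgc : 0 ≤ b c - a c := hcS.2
  have hct : c < t := by
    rcases lt_or_eq_of_le hct' with h | h
    · exact h
    · exfalso; rw [h] at hgc; linarith
  -- on (c, t], g < 0, hence x > 0
  have hgneg : ∀ v ∈ Set.Ioc c t, b v - a v < 0 := by
    intro v hv
    by_contra h
    push_neg at h
    have : v ∈ S := ⟨⟨le_trans hc0 hv.1.le, hv.2⟩, h⟩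
    exact absurd (le_csSup hbdd this) (not_le.mpr hv.1)
  have hxpos : ∀ v ∈ Set.Ioc c t, 0 < x v := by
    intro v hv
    have hv0 : (0:ℝ) ≤ v := le_trans hc0 hv.1.le
    have := hgeq v hv0
    have := hy_nn v hv0
    have := hgneg v hv
    linarith
  -- a is constant equal to a t on (c, t]
  have hconst : ∀ u ∈ Set.Ioc c t, a u = a t := by
    intro u hu
    have hu0 : (0:ℝ) < u := lt_of_le_of_lt hc0 hu.1
    set T := {v : ℝ | v ∈ Set.Icc u t ∧ a v = a t} with hTdef
    have htT : t ∈ T := ⟨⟨hu.2, le_refl t⟩, rfl⟩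
    have hTbdd : BddBelow T := ⟨u, fun v hv => hv.1.1⟩
    have hTclosed : IsClosed T := by
      have : T = Set.Icc u t ∩ a ⁻¹' {a t} := by
        ext v; simp [hTdef]
      rw [this]
      exact ContinuousOn.preimage_isClosed_of_isClosed
        (ha_cont.mono (fun v hv => le_trans hu0.le hv.1)) isClosed_Icc isClosed_singleton
    have hmT : sInf T ∈ T := hTclosed.csInf_mem ⟨t, htT⟩ hTbdd
    set m := sInf T with hmdef
    have hmu : u ≤ m := hmT.1.1
    rcases eq_or_lt_of_le hmu with h | h
    · rw [h]; exact hmT.2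
    · exfalso
      have hm0 : (0:ℝ) < m := lt_trans hu0 h
      have hmIoc : m ∈ Set.Ioc c t := ⟨lt_trans hu.1 h, hmT.1.2⟩
      have hxm := hxpos m hmIoc
      have hev := hloc m hm0.le hxm
      have hev' : ∀ᶠ s in nhds m, a s = a m := by
        rwa [nhdsWithin_eq_nhds.mpr (Ici_mem_nhds hm0)] at hev
      rw [Metric.eventually_nhds_iff] at hev'
      obtain ⟨ε, hε, hball⟩ := hev'
      obtain ⟨v, hv1, hv2⟩ := exists_between (max_lt h (by linarith : m - ε < m))
      have hvu : u ≤ v := le_of_lt (lt_of_le_of_lt (le_max_left _ _) hv1)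
      have hvm : a v = a m := hball (by
        rw [Real.dist_eq, abs_lt]
        constructor
        · have := lt_of_le_of_lt (le_max_right (u:ℝ) (m - ε)) hv1
          linarith
        · linarith)
      have hvT : v ∈ T := ⟨⟨hvu, le_trans hv2.le hmT.1.2⟩, hvm.trans hmT.2⟩
      exact absurd (csInf_le hTbdd hvT) (not_le.mpr hv2)
  -- a c = a t by continuity from the right
  have hac : a c = a t := by
    have h1 : Filter.Tendsto a (nhdsWithin c (Set.Ioi c)) (nhds (a c)) :=
      (ha_cont c hc0).mono_left (nhdsWithin_mono _ (fun v hv => le_trans hc0 (le_of_lt hv)))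
    have h2 : ∀ᶠ v in nhdsWithin c (Set.Ioi c), a v = a t := by
      filter_upwards [Ioc_mem_nhdsGT_of_mem ⟨le_refl c, hct⟩] with v hv
      exact hconst v hv
    have h3 : Filter.Tendsto a (nhdsWithin c (Set.Ioi c)) (nhds (a t)) :=
      Filter.Tendsto.congr' (Filter.EventuallyEq.symm h2) tendsto_const_nhds
    exact tendsto_nhds_unique h1 h3
  have hbct : b c ≤ b t := hb_mono hc0 ht hct'
  linarith
end

section
/- Let f : [0,∞) → ℝ be continuous with f(0) ≥ 0. Then the Skorokhod decomposition of f is unique: if (a, x) and (a', x') are both Skorokhod decompositions of f, then a = a' and x = x'. -/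
open Set Filter MeasureTheory

private lemma const_of_loc (a : ℝ → ℝ) {s t : ℝ} (hst : s ≤ t)
    (hc : ContinuousOn a (Set.Icc s t))
    (hloc : ∀ u ∈ Set.Ioc s t, ∀ᶠ v in nhds u, a v = a u) :
    a t = a s := by
  set T : Set ℝ := {u ∈ Set.Icc s t | a u = a t} with hT
  have htT : t ∈ T := ⟨⟨hst, le_refl t⟩, rfl⟩
  have hTne : T.Nonempty := ⟨t, htT⟩
  have hTb : BddBelow T := ⟨s, fun u hu => hu.1.1⟩
  set c := sInf T with hcdef
  have hsc : s ≤ c := le_csInf hTne fun u hu => hu.1.1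
  have hct : c ≤ t := csInf_le hTb htT
  have hccl : c ∈ closure T := csInf_mem_closure hTne hTb
  have hTsub : T ⊆ Set.Icc s t := fun u hu => hu.1
  have hac : a c = a t := by
    have h1 : ContinuousWithinAt a T c := (hc c ⟨hsc, hct⟩).mono hTsub
    have h2 : a c ∈ closure (a '' T) := h1.mem_closure_image hccl
    have h3 : a '' T ⊆ {a t} := by rintro _ ⟨u, hu, rfl⟩; exact hu.2
    have h4 := closure_mono h3 h2
    rwa [closure_singleton, Set.mem_singleton_iff] at h4
  rcases eq_or_lt_of_le hsc with hsc' | hsc'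
  · rw [← hsc'] at hac; exact hac.symm
  · exfalso
    have hcioc : c ∈ Set.Ioc s t := ⟨hsc', hct⟩
    have hev := hloc c hcioc
    rw [Metric.eventually_nhds_iff] at hev
    obtain ⟨ε, hε, hball⟩ := hev
    set v := max s (c - ε/2) with hv
    have hvs : s ≤ v := le_max_left _ _
    have hvc : v < c := max_lt hsc' (by linarith)
    have hdist : dist v c < ε := by
      rw [Real.dist_eq, abs_of_nonpos (by linarith)]
      have h5 : c - ε/2 ≤ v := le_max_right _ _
      linarith
    have hav : a v = a c := hball hdist
    have hvT : v ∈ T := ⟨⟨hvs, le_trans hvc.le hct⟩, hav.trans hac⟩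
    exact absurd (csInf_le hTb hvT) (not_le.2 hvc)

private lemma skorokhod_le (f a x a' x' : ℝ → ℝ)
    (h : SkorokhodDecomp f a x) (h' : SkorokhodDecomp f a' x') :
    ∀ t ∈ Set.Ici (0:ℝ), x t ≤ x' t := by
  intro t ht
  by_contra hlt
  push_neg at hlt
  obtain ⟨⟨ha_c, hx_c, ha_m, hx_nn, hxeq, hx0⟩, hloc⟩ := h
  obtain ⟨⟨ha'_c, hx'_c, ha'_m, hx'_nn, hx'eq, hx'0⟩, hloc'⟩ := h'
  have ht0 : (0:ℝ) ≤ t := ht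
  set S : Set ℝ := {u ∈ Set.Icc 0 t | x u ≤ x' u} with hS
  have h0S : (0:ℝ) ∈ S := ⟨⟨le_refl 0, ht0⟩, by rw [hx0, hx'0]⟩
  have hSne : S.Nonempty := ⟨0, h0S⟩
  have hSb : BddAbove S := ⟨t, fun u hu => hu.1.2⟩
  set s := sSup S with hsdef
  have hs0 : 0 ≤ s := le_csSup hSb h0S
  have hst : s ≤ t := csSup_le hSne fun u hu => hu.1.2
  have hIcc : Set.Icc s t ⊆ Set.Ici (0:ℝ) := fun u hu => le_trans hs0 hu.1
  have hIcc0 : Set.Icc (0:ℝ) t ⊆ Set.Ici (0:ℝ) := fun u hu => hu.1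
  have hxs : x s ≤ x' s := by
    have hscl : s ∈ closure S := csSup_mem_closure hSne hSb
    have hg : ContinuousWithinAt (fun u => x u - x' u) S s := by
      have hco : ContinuousOn (fun u => x u - x' u) (Set.Ici 0) := hx_c.sub hx'_c
      exact (hco s (hIcc ⟨le_refl s, hst⟩)).mono (fun u hu => hIcc0 hu.1)
    have h2 := hg.mem_closure_image hscl
    have h3 : (fun u => x u - x' u) '' S ⊆ Set.Iic 0 := by
      rintro _ ⟨u, hu, rfl⟩; simpa using hu.2
    have h4 := closure_mono h3 h2
    rw [IsClosed.closure_eq isClosed_Iic] at h4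
    simpa using h4
  have hst' : s < t :=
    lt_of_le_of_ne hst fun he => absurd (he ▸ hxs) (not_le.2 hlt)
  have hgt : ∀ u ∈ Set.Ioc s t, x' u < x u := by
    intro u hu
    by_contra hle
    push_neg at hle
    have huS : u ∈ S := ⟨⟨le_trans hs0 hu.1.le, hu.2⟩, hle⟩
    exact absurd (le_csSup hSb huS) (not_le.2 hu.1)
  have hat : a t = a s := by
    apply const_of_loc a hst (ha_c.mono hIcc)
    intro u hu
    have hu0 : 0 < u := lt_of_le_of_lt hs0 hu.1
    have hxu : 0 < x u := lt_of_le_of_lt (hx'_nn u hu0.le) (hgt u hu)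
    have hev := hloc u hu0.le hxu
    rwa [nhdsWithin_eq_nhds.2 (Ici_mem_nhds hu0)] at hev
  have e1 : x t = a t + f t := hxeq t ht
  have e2 : x' t = a' t + f t := hx'eq t ht
  have e3 : x s = a s + f s := hxeq s hs0
  have e4 : x' s = a' s + f s := hx'eq s hs0
  have hmono : a' s ≤ a' t := ha'_m hs0 ht hst
  linarith

/-- uniqueness of the Skorokhod decomposition. -/
theorem skorokhod_unique (f a x a' x' : ℝ → ℝ)
    (hf : ContinuousOn f (Set.Ici 0)) (hf0 : 0 ≤ f 0)
    (h : SkorokhodDecomp f a x) (h' : SkorokhodDecomp f a' x') :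
    Set.EqOn a a' (Set.Ici 0) ∧ Set.EqOn x x' (Set.Ici 0) := by
  have h1 := skorokhod_le f a x a' x' h h'
  have h2 := skorokhod_le f a' x' a x h' h
  have hx : Set.EqOn x x' (Set.Ici 0) := fun t ht => le_antisymm (h1 t ht) (h2 t ht)
  refine ⟨fun t ht => ?_, hx⟩
  have e1 := h.1.2.2.2.2.1 t ht
  have e2 := h'.1.2.2.2.2.1 t ht
  have e3 := hx ht
  linarith
end

section
/- Let f : [0,∞) → ℝ be continuous with f(0) ≥ 0, let (a, x) be its Skorokhod decomposition, and let β, υ > 0. If (b, y) is an approximate (β, υ) decomposition of f, then 0 ≤ b(t) − a(t) ≤ υ + β t for all t ≥ 0. -/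
open Set Filter MeasureTheory

/-- If a continuous function on `[0,∞)` is locally constant at every point of `(r,t]`,
then it is constant on `[r,t]`. -/
lemma const_of_loc_const {a : ℝ → ℝ} (ha : ContinuousOn a (Set.Ici 0)) {r t : ℝ}
    (hr : 0 ≤ r) (hrt : r < t)
    (H : ∀ u, r < u → u ≤ t → ∀ᶠ s in nhdsWithin u (Set.Ici 0), a s = a u) :
    a r = a t := by
  have key : ∀ u, r < u → u ≤ t → a u = a t := by
    intro u hu hut
    have hu0 : (0:ℝ) < u := lt_of_le_of_lt hr hu
    set S : Set ℝ := Set.Icc u t ∩ a ⁻¹' {a u} with hS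
    have hSne : S.Nonempty := ⟨u, ⟨le_refl u, hut⟩, rfl⟩
    have hSb : BddAbove S := ⟨t, fun v hv => hv.1.2⟩
    have hSclosed : IsClosed S := by
      refine ContinuousOn.preimage_isClosed_of_isClosed
        (ha.mono (fun v hv => le_trans hu0.le hv.1)) isClosed_Icc isClosed_singleton
    have hc := hSclosed.csSup_mem hSne hSb
    set c := sSup S with hcdef
    obtain ⟨⟨huc, hct⟩, hac⟩ := hc
    have hac : a c = a u := hac
    rcases eq_or_lt_of_le hct with hct' | hct'
    · rw [← hct', hac]
    · exfalso
      have hc0 : (0:ℝ) < c := lt_of_lt_of_le hu0 huc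
      have hev : ∀ᶠ s in nhdsWithin c (Set.Ici 0), a s = a c :=
        H c (lt_of_lt_of_le hu huc) hct
      have heq : nhdsWithin c (Set.Ici 0) = nhds c :=
        nhdsWithin_eq_nhds.2 (Ici_mem_nhds hc0)
      have hev' : ∀ᶠ s in nhdsWithin c (Set.Ioi c), a s = a c :=
        nhdsWithin_le_nhds (heq ▸ hev)
      have hmem : Set.Ioo c t ∈ nhdsWithin c (Set.Ioi c) :=
        Ioo_mem_nhdsGT_of_mem ⟨le_refl c, hct'⟩
      obtain ⟨s, hs1, hs2⟩ :=
        (hev'.and (Filter.eventually_of_mem hmem fun s hs => hs)).exists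
      exact absurd (le_csSup hSb ⟨⟨le_trans huc hs2.1.le, hs2.2.le⟩, by
        rw [Set.mem_preimage, Set.mem_singleton_iff, hs1, hac]⟩) (not_le.2 hs2.1)
  have h1 : Filter.Tendsto a (nhdsWithin r (Set.Ioi r)) (nhds (a r)) :=
    (ha r hr).mono_left (nhdsWithin_mono r (fun v hv => le_trans hr (le_of_lt hv)))
  have h2 : Filter.Tendsto a (nhdsWithin r (Set.Ioi r)) (nhds (a t)) := by
    refine Filter.Tendsto.congr' ?_ tendsto_const_nhds
    filter_upwards [Ioc_mem_nhdsGT_of_mem ⟨le_refl r, hrt⟩] with u hu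
    exact (key u hu.1 hu.2).symm
  exact tendsto_nhds_unique h1 h2

/-- an approximate `(β, υ)` decomposition satisfies
`0 ≤ b t - a t ≤ υ + β t`. -/
theorem approx_skorokhod_bound (f a x b y : ℝ → ℝ) (β υ : ℝ)
    (hf : ContinuousOn f (Set.Ici 0)) (hf0 : 0 ≤ f 0)
    (hβ : 0 < β) (hυ : 0 < υ)
    (hsk : SkorokhodDecomp f a x) (happ : ApproxDecomp β υ f b y) :
    ∀ t ∈ Set.Ici (0:ℝ), 0 ≤ b t - a t ∧ b t - a t ≤ υ + β * t := by
  obtain ⟨⟨haC, hxC, haM, hxpos, hxeq, hx0⟩, hloc⟩ := hsk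
  obtain ⟨⟨hbC, hyC, hbM, hypos, hyeq, hy0⟩, hbd⟩ := happ
  have ha0 : a 0 = 0 := by have := hxeq 0 Set.self_mem_Ici; linarith [hx0]
  have hb0 : b 0 = 0 := by have := hyeq 0 Set.self_mem_Ici; linarith [hy0]
  intro t ht
  have ht : (0:ℝ) ≤ t := ht
  constructor
  · -- a t ≤ b t
    by_contra hcon
    push_neg at hcon
    have hba : b t < a t := by linarith
    have ht0 : (0:ℝ) < t := by
      rcases eq_or_lt_of_le ht with h | h
      · exfalso; rw [← h] at hba; rw [ha0, hb0] at hba; linarith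
      · exact h
    set S : Set ℝ := Set.Icc 0 t ∩ (fun u => a u - b u) ⁻¹' Set.Iic 0 with hS
    have hSne : S.Nonempty := ⟨0, ⟨le_refl 0, ht⟩, by
      simp [Set.mem_preimage, ha0, hb0]⟩
    have hSb : BddAbove S := ⟨t, fun v hv => hv.1.2⟩
    have hSclosed : IsClosed S :=
      ContinuousOn.preimage_isClosed_of_isClosed
        ((haC.mono (fun v hv => hv.1)).sub (hbC.mono (fun v hv => hv.1)))
        isClosed_Icc isClosed_Iic
    have hr := hSclosed.csSup_mem hSne hSb
    set r := sSup S with hrdef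
    obtain ⟨⟨hr0, hrt⟩, hrab⟩ := hr
    have hrab : a r ≤ b r := by
      have : a r - b r ≤ 0 := hrab
      linarith
    have hrt' : r < t := by
      rcases eq_or_lt_of_le hrt with h | h
      · exfalso; rw [h] at hrab; linarith
      · exact h
    have hkey : a r = a t := by
      refine const_of_loc_const haC hr0 hrt' ?_
      intro u hu hut
      have hu0 : (0:ℝ) ≤ u := le_trans hr0 hu.le
      have hnot : ¬ a u ≤ b u := by
        intro habs
        have : u ∈ S := ⟨⟨hu0, hut⟩, by simp [Set.mem_preimage]; linarith⟩
        exact absurd (le_csSup hSb this) (not_le.2 hu)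
      push_neg at hnot
      have hxu : 0 < x u := by
        have h1 := hxeq u hu0
        have h2 := hyeq u hu0
        have h3 := hypos u hu0
        linarith
      exact hloc u hu0 hxu
    have : b r ≤ b t := hbM hr0 ht hrt
    linarith
  · -- b t - a t ≤ υ + β * t
    have hat0 : 0 ≤ a t := ha0 ▸ haM (le_refl (0:ℝ)) ht ht
    by_cases hcase : ∃ s, s ∈ Set.Icc 0 t ∧ y s ≤ υ
    · set S : Set ℝ := Set.Icc 0 t ∩ y ⁻¹' Set.Iic υ with hS
      have hSne : S.Nonempty := by
        obtain ⟨s, hs1, hs2⟩ := hcase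
        exact ⟨s, hs1, hs2⟩
      have hSb : BddAbove S := ⟨t, fun v hv => hv.1.2⟩
      have hSclosed : IsClosed S :=
        ContinuousOn.preimage_isClosed_of_isClosed
          (hyC.mono (fun v hv => hv.1)) isClosed_Icc isClosed_Iic
      have hs := hSclosed.csSup_mem hSne hSb
      set s := sSup S with hsdef
      obtain ⟨⟨hs0, hst⟩, hys⟩ := hs
      have hys : y s ≤ υ := hys
      have hbs : b s + f s ≤ υ := by have := hyeq s hs0; linarith
      have hfs : -f s ≤ a s := by
        have h1 := hxeq s hs0
        have h2 := hxpos s hs0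
        linarith
      have has : a s ≤ a t := haM hs0 ht hst
      have hbst : b t - b s ≤ β * t := by
        rcases eq_or_lt_of_le hst with h | h
        · rw [h]; simp; positivity
        · have hev : ∀ᶠ s' in nhdsWithin s (Set.Ioi s),
              b t - b s' ≤ β * (t - s') := by
            filter_upwards [Ioc_mem_nhdsGT_of_mem ⟨le_refl s, h⟩] with s' hs'
            refine hbd s' t (le_trans hs0 hs'.1.le) hs'.2 ?_
            intro u hu
            have hu' : s < u := lt_of_lt_of_le hs'.1 hu.1
            by_contra habs
            push_neg at habs
            have : u ∈ S := ⟨⟨le_trans hs0 hu'.le, hu.2⟩, habs.le⟩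
            exact absurd (le_csSup hSb this) (not_le.2 hu')
          have h1 : Filter.Tendsto (fun s' => b t - b s')
              (nhdsWithin s (Set.Ioi s)) (nhds (b t - b s)) := by
            exact (tendsto_const_nhds.sub
              ((hbC s hs0).mono_left
                (nhdsWithin_mono s (fun v hv => le_trans hs0 (le_of_lt hv)))))
          have h2 : Filter.Tendsto (fun s' => β * (t - s'))
              (nhdsWithin s (Set.Ioi s)) (nhds (β * (t - s))) := by
            exact ((tendsto_const_nhds.sub tendsto_id).const_mul β).mono_left
              nhdsWithin_le_nhds
          have := le_of_tendsto_of_tendsto h1 h2 hev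
          nlinarith
      linarith
    · push_neg at hcase
      have : b t - b 0 ≤ β * (t - 0) := by
        refine hbd 0 t (le_refl 0) ht ?_
        intro u hu
        exact (hcase u hu).le
      rw [hb0] at this
      nlinarith
end

section
/- Let f : [0,∞) → ℝ be continuous with f(0) ≥ 0 and Skorokhod decomposition (a, x). Suppose for each ε > 0 we are given an approximate (β(ε), υ(ε)) decomposition (bᵉ, yᵉ) of f, with β(ε) → 0 and υ(ε) → 0 as ε → 0. Then bᵉ converges to a and yᵉ converges to x uniformly on every compact interval [0, T] as ε → 0. -/
open Set Filter MeasureTheory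

/-- For an admissible pair, `b 0 = 0`. -/
lemma AdmissiblePair.zero {f b y : ℝ → ℝ} (h : AdmissiblePair f b y) : b 0 = 0 := by
  have h1 := h.2.2.2.2.1 0 Set.self_mem_Ici
  have h2 := h.2.2.2.2.2
  linarith

/-- Minimality of the Skorokhod compensator: if `M ≥ 0` dominates `-f` on `[0,t]`,
then `a t ≤ M`. -/
lemma sk_min {f a x : ℝ → ℝ} (hsk : SkorokhodDecomp f a x)
    {t M : ℝ} (ht : 0 ≤ t) (hM0 : 0 ≤ M) (hM : ∀ s ∈ Set.Icc (0:ℝ) t, -f s ≤ M) :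
    a t ≤ M := by
  obtain ⟨⟨ha_cont, hx_cont, ha_mono, hx_nn, hxy, hx0⟩, hloc⟩ := hsk
  have ha0 : a 0 = 0 := by have := hxy 0 Set.self_mem_Ici; linarith
  by_contra hcon
  push_neg at hcon
  have hIcc : Set.Icc (0:ℝ) t ⊆ Set.Ici 0 := fun s hs => hs.1
  have haC : ContinuousOn a (Set.Icc 0 t) := ha_cont.mono hIcc
  set S : Set ℝ := Set.Icc 0 t ∩ a ⁻¹' Set.Iic M with hSdef
  have hSclosed : IsClosed S :=
    haC.preimage_isClosed_of_isClosed isClosed_Icc isClosed_Iic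
  have hScomp : IsCompact S :=
    isCompact_Icc.of_isClosed_subset hSclosed (fun s hs => hs.1)
  have hSne : S.Nonempty := ⟨0, ⟨le_refl 0, ht⟩, by simpa [ha0] using hM0⟩
  set r : ℝ := sSup S with hrdef
  have hrS : r ∈ S := hScomp.sSup_mem hSne
  have har : a r ≤ M := hrS.2
  have hrt : r < t := by
    rcases lt_or_eq_of_le hrS.1.2 with h | h
    · exact h
    · exact absurd (h ▸ har) (not_le.mpr hcon)
  have hr0 : 0 ≤ r := hrS.1.1
  -- the set where a equals a t, on [r,t]
  set C : Set ℝ := Set.Icc r t ∩ a ⁻¹' {a t} with hCdef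
  have hCclosed : IsClosed C :=
    (haC.mono (Set.Icc_subset_Icc hr0 le_rfl)).preimage_isClosed_of_isClosed
      isClosed_Icc isClosed_singleton
  have hCcomp : IsCompact C :=
    isCompact_Icc.of_isClosed_subset hCclosed (fun s hs => hs.1)
  have hCne : C.Nonempty := ⟨t, ⟨le_of_lt hrt, le_rfl⟩, rfl⟩
  set c : ℝ := sInf C with hcdef
  have hcC : c ∈ C := hCcomp.sInf_mem hCne
  have hac : a c = a t := hcC.2
  have hcr : c = r := by
    by_contra hne
    have hrc : r < c := lt_of_le_of_ne hcC.1.1 (Ne.symm hne)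
    have hc0 : (0:ℝ) < c := lt_of_le_of_lt hr0 hrc
    have hxc : 0 < x c := by
      have h1 := hxy c (Set.mem_Ici.mpr (le_of_lt hc0))
      have h2 : -f c ≤ M := hM c ⟨le_of_lt hc0, hcC.1.2⟩
      have : a c = a t := hac
      linarith
    have hev := hloc c (Set.mem_Ici.mpr (le_of_lt hc0)) hxc
    have hnhds : nhdsWithin c (Set.Ici 0) = nhds c :=
      nhdsWithin_eq_nhds.mpr (Ici_mem_nhds hc0)
    rw [hnhds] at hev
    obtain ⟨δ, hδ, hball⟩ := Metric.eventually_nhds_iff.mp hev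
    set s' : ℝ := max r (c - δ / 2) with hs'def
    have hs'c : s' < c := by
      apply max_lt hrc; linarith
    have hdist : dist s' c < δ := by
      rw [Real.dist_eq, abs_of_nonpos (by linarith)]
      have : c - δ / 2 ≤ s' := le_max_right _ _
      linarith
    have has' : a s' = a c := hball hdist
    have hs'C : s' ∈ C := by
      refine ⟨⟨le_max_left _ _, ?_⟩, by simp [has', hac]⟩
      apply max_le (le_of_lt hrt); linarith [hcC.1.2]
    have := csInf_le hCcomp.bddBelow hs'C
    linarith
  have : a r = a t := hcr ▸ hac
  linarith

/-- Upper bound for an approximate decomposition against a Skorokhod compensator. -/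
lemma approx_ub {f bb yy a x : ℝ → ℝ} {β υ : ℝ}
    (hap : ApproxDecomp β υ f bb yy) (hadm : AdmissiblePair f a x)
    {t T : ℝ} (ht : t ∈ Set.Icc (0:ℝ) T) :
    bb t - a t ≤ |υ| + |β| * T := by
  obtain ⟨⟨hb_cont, hy_cont, hb_mono, hy_nn, hby, hy0⟩, hcond⟩ := hap
  obtain ⟨ha_cont, hx_cont, ha_mono, hx_nn, hxy, hx0⟩ := hadm
  have ht0 : 0 ≤ t := ht.1
  have htT : t ≤ T := ht.2
  have hT0 : 0 ≤ T := le_trans ht0 htT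
  have hb0 : bb 0 = 0 := by have := hby 0 Set.self_mem_Ici; linarith
  have ha0 : a 0 = 0 := by have := hxy 0 Set.self_mem_Ici; linarith
  have hat0 : 0 ≤ a t := ha0 ▸ (ha_mono Set.self_mem_Ici (Set.mem_Ici.mpr ht0) ht0)
  have hυ : υ ≤ |υ| := le_abs_self υ
  have hυ0 : 0 ≤ |υ| := abs_nonneg υ
  have hβ0 : 0 ≤ |β| := abs_nonneg β
  have hβmul : ∀ s : ℝ, 0 ≤ s → s ≤ T → β * s ≤ |β| * T := by
    intro s hs hsT
    calc β * s ≤ |β| * s := mul_le_mul_of_nonneg_right (le_abs_self β) hs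
    _ ≤ |β| * T := mul_le_mul_of_nonneg_left hsT hβ0
  set S : Set ℝ := Set.Icc 0 t ∩ yy ⁻¹' Set.Iic υ with hSdef
  by_cases hSne : S.Nonempty
  · -- there is a last time ≤ t where yy ≤ υ
    have hSclosed : IsClosed S :=
      ((hy_cont.mono (fun s hs => hs.1)).preimage_isClosed_of_isClosed
        isClosed_Icc isClosed_Iic)
    have hScomp : IsCompact S :=
      isCompact_Icc.of_isClosed_subset hSclosed (fun s hs => hs.1)
    set s₀ : ℝ := sSup S with hs₀def
    have hs₀S : s₀ ∈ S := hScomp.sSup_mem hSne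
    have hs₀0 : 0 ≤ s₀ := hs₀S.1.1
    have hs₀t : s₀ ≤ t := hs₀S.1.2
    have hys₀ : yy s₀ ≤ υ := hs₀S.2
    have hbs₀ : bb s₀ ≤ |υ| + a t := by
      have h1 := hby s₀ (Set.mem_Ici.mpr hs₀0)
      have h2 := hxy s₀ (Set.mem_Ici.mpr hs₀0)
      have h3 := hx_nn s₀ (Set.mem_Ici.mpr hs₀0)
      have h4 : a s₀ ≤ a t := ha_mono (Set.mem_Ici.mpr hs₀0) (Set.mem_Ici.mpr ht0) hs₀t
      linarith
    rcases eq_or_lt_of_le hs₀t with heq | hlt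
    · -- s₀ = t
      have : bb t = bb s₀ := by rw [heq]
      linarith [mul_nonneg hβ0 hT0, this ▸ hbs₀]
    · -- s₀ < t : yy ≥ υ on [s₀, t]
      have hge : ∀ s ∈ Set.Icc s₀ t, υ ≤ yy s := by
        intro s hs
        rcases eq_or_lt_of_le hs.1 with heq | hlt'
        · -- s = s₀ : show υ ≤ yy s₀
          rw [← heq]
          by_contra hcon
          push_neg at hcon
          have hev : ∀ᶠ u in nhdsWithin s₀ (Set.Ici 0), yy u < υ :=
            (hy_cont s₀ (Set.mem_Ici.mpr hs₀0)).eventually (eventually_lt_nhds hcon)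
          have hle : nhdsWithin s₀ (Set.Ioi s₀) ≤ nhdsWithin s₀ (Set.Ici 0) :=
            nhdsWithin_mono _ (fun u hu => le_trans hs₀0 (le_of_lt hu))
          have hev' : ∀ᶠ u in nhdsWithin s₀ (Set.Ioi s₀), yy u < υ := hev.filter_mono hle
          have hIoc : Set.Ioc s₀ t ∈ nhdsWithin s₀ (Set.Ioi s₀) :=
            Ioc_mem_nhdsGT_of_mem ⟨le_rfl, hlt⟩
          obtain ⟨u, hu1, hu2⟩ :=
            (hev'.and (Filter.eventually_of_mem hIoc (fun u hu => hu))).exists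
          have huS : u ∈ S := ⟨⟨le_trans hs₀0 (le_of_lt hu2.1), hu2.2⟩, le_of_lt hu1⟩
          exact absurd (le_csSup hScomp.bddAbove huS) (not_le.mpr hu2.1)
        · by_contra hcon
          push_neg at hcon
          have : s ∈ S := ⟨⟨le_trans hs₀0 hs.1, hs.2⟩, le_of_lt hcon⟩
          exact absurd (le_csSup hScomp.bddAbove this) (not_le.mpr hlt')
      have hcc := hcond s₀ t hs₀0 hs₀t hge
      have := hβmul (t - s₀) (by linarith) (by linarith)
      linarith
  · -- yy > υ on all of [0,t]
    have hge : ∀ s ∈ Set.Icc (0:ℝ) t, υ ≤ yy s := by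
      intro s hs
      by_contra hcon
      push_neg at hcon
      exact hSne ⟨s, hs, le_of_lt hcon⟩
    have hcc := hcond 0 t le_rfl ht0 hge
    have := hβmul (t - 0) (by linarith) (by linarith)
    linarith

/-- approximate `(β ε, υ ε)` decompositions with `β ε → 0`, `υ ε → 0`
converge uniformly on compact intervals to the Skorokhod decomposition. -/
theorem approx_skorokhod_conv (f a x : ℝ → ℝ)
    (hf : ContinuousOn f (Set.Ici 0)) (hf0 : 0 ≤ f 0)
    (hsk : SkorokhodDecomp f a x)
    (b y : ℝ → ℝ → ℝ) (β υ : ℝ → ℝ)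
    (happ : ∀ ε > 0, ApproxDecomp (β ε) (υ ε) f (b ε) (y ε))
    (hβ : Tendsto β (nhdsWithin 0 (Set.Ioi 0)) (nhds 0))
    (hυ : Tendsto υ (nhdsWithin 0 (Set.Ioi 0)) (nhds 0)) :
    ∀ T > 0,
      TendstoUniformlyOn b a (nhdsWithin 0 (Set.Ioi 0)) (Set.Icc 0 T) ∧
      TendstoUniformlyOn y x (nhdsWithin 0 (Set.Ioi 0)) (Set.Icc 0 T) := by
  intro T hT
  -- the error bound
  set e : ℝ → ℝ := fun ε => |υ ε| + |β ε| * T with hedef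
  have he : Tendsto e (nhdsWithin 0 (Set.Ioi 0)) (nhds 0) := by
    have h1 : Tendsto (fun ε => |υ ε|) (nhdsWithin 0 (Set.Ioi 0)) (nhds 0) := by
      simpa using hυ.abs
    have h2 : Tendsto (fun ε => |β ε| * T) (nhdsWithin 0 (Set.Ioi 0)) (nhds 0) := by
      have := (hβ.abs).mul_const T
      simpa using this
    simpa using h1.add h2
  -- key pointwise estimate
  have key : ∀ ε > 0, ∀ t ∈ Set.Icc (0:ℝ) T,
      0 ≤ b ε t - a t ∧ b ε t - a t ≤ e ε := by
    intro ε hε t ht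
    obtain ⟨hadm, hcond⟩ := happ ε hε
    obtain ⟨hb_cont, hy_cont, hb_mono, hy_nn, hby, hy0⟩ := hadm
    have hb0 : b ε 0 = 0 := by have := hby 0 Set.self_mem_Ici; linarith
    have ht0 : 0 ≤ t := ht.1
    constructor
    · -- a t ≤ b ε t via minimality
      have hbt0 : 0 ≤ b ε t := hb0 ▸ hb_mono Set.self_mem_Ici (Set.mem_Ici.mpr ht0) ht0
      have hdom : ∀ s ∈ Set.Icc (0:ℝ) t, -f s ≤ b ε t := by
        intro s hs
        have h1 := hby s (Set.mem_Ici.mpr hs.1)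
        have h2 := hy_nn s (Set.mem_Ici.mpr hs.1)
        have h3 : b ε s ≤ b ε t := hb_mono (Set.mem_Ici.mpr hs.1) (Set.mem_Ici.mpr ht0) hs.2
        linarith
      linarith [sk_min hsk ht0 hbt0 hdom]
    · exact approx_ub ⟨⟨hb_cont, hy_cont, hb_mono, hy_nn, hby, hy0⟩, hcond⟩ hsk.1 ht
  have main : ∀ ε' > (0:ℝ), ∀ᶠ ε in nhdsWithin 0 (Set.Ioi 0),
      ∀ t ∈ Set.Icc (0:ℝ) T, dist (a t) (b ε t) < ε' := by
    intro ε' hε'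
    have hev1 : ∀ᶠ ε in nhdsWithin 0 (Set.Ioi 0), e ε < ε' := by
      have := he.eventually (eventually_lt_nhds hε')
      simpa using this
    have hev2 : ∀ᶠ ε in nhdsWithin (0:ℝ) (Set.Ioi 0), ε ∈ Set.Ioi (0:ℝ) :=
      self_mem_nhdsWithin
    filter_upwards [hev1, hev2] with ε h1 h2 t ht
    obtain ⟨hlo, hhi⟩ := key ε h2 t ht
    rw [Real.dist_eq, abs_of_nonpos (by linarith)]
    linarith
  constructor
  · rw [Metric.tendstoUniformlyOn_iff]
    exact main
  · rw [Metric.tendstoUniformlyOn_iff]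
    intro ε' hε'
    filter_upwards [main ε' hε', (self_mem_nhdsWithin :
        ∀ᶠ ε in nhdsWithin (0:ℝ) (Set.Ioi 0), ε ∈ Set.Ioi (0:ℝ))] with ε h1 h2 t ht
    have hby := ((happ ε h2).1).2.2.2.2.1 t (Set.mem_Ici.mpr ht.1)
    have hxy := (hsk.1).2.2.2.2.1 t (Set.mem_Ici.mpr ht.1)
    have : dist (x t) (y ε t) = dist (a t) (b ε t) := by
      rw [Real.dist_eq, Real.dist_eq, hby, hxy]
      ring_nf
    rw [this]
    exact h1 t ht
end

section
/- Let α > 1 and ε > 0. Let f : [0,∞) → ℝ be continuous with f(0) ≥ 0, and suppose yᵉ : [0,∞) → (0,∞) is continuous and satisfies the integral equation yᵉ(t) = f(t) + ε ∫₀ᵗ (yᵉ(u))^{−α} du. Set bᵉ(t) = ε ∫₀ᵗ (yᵉ(u))^{−α} du and let (a, x) be the Skorokhod decomposition of f. Then for all t ≥ 0: 0 ≤ bᵉ(t) − a(t) ≤ (1 + 1/α)(α ε t)^{1/(1+α)}. -/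
open Set Filter MeasureTheory

/-- if `yᵉ` solves `yᵉ t = f t + ε ∫₀ᵗ (yᵉ u)^(-α) du` with `α > 1`,
then `bᵉ t = ε ∫₀ᵗ (yᵉ u)^(-α) du` satisfies `0 ≤ bᵉ t - a t ≤ (1 + 1/α)(α ε t)^(1/(1+α))`,
where `(a, x)` is the Skorokhod decomposition of `f`. -/
theorem approx_skorokhod_integral_bound (α ε : ℝ) (hα : 1 < α) (hε : 0 < ε)
    (f a x yε bε : ℝ → ℝ)
    (hf : ContinuousOn f (Set.Ici 0)) (hf0 : 0 ≤ f 0)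
    (hsk : SkorokhodDecomp f a x)
    (hycont : ContinuousOn yε (Set.Ici 0))
    (hypos : ∀ t ∈ Set.Ici (0:ℝ), 0 < yε t)
    (hyeq : ∀ t ∈ Set.Ici (0:ℝ), yε t = f t + ε * ∫ u in (0:ℝ)..t, (yε u) ^ (-α))
    (hbeq : ∀ t, bε t = ε * ∫ u in (0:ℝ)..t, (yε u) ^ (-α)) :
    ∀ t ∈ Set.Ici (0:ℝ),
      0 ≤ bε t - a t ∧ bε t - a t ≤ (1 + 1/α) * (α * ε * t) ^ (1/(1+α)) := by
  obtain ⟨⟨hacont, hxcont, hamono, hxnn, hxeq, hx0⟩, hloc⟩ := hsk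
  set g : ℝ → ℝ := fun u => yε u ^ (-α) with hgdef
  have hgcont : ContinuousOn g (Ici 0) := by
    exact hycont.rpow_const (fun u hu => Or.inl (hypos u hu).ne')
  have hgnn : ∀ u ∈ Ici (0:ℝ), 0 ≤ g u := fun u hu =>
    Real.rpow_nonneg (hypos u hu).le _
  have hgint : ∀ s u : ℝ, 0 ≤ s → s ≤ u → IntervalIntegrable g volume s u := by
    intro s u hs hsu
    apply ContinuousOn.intervalIntegrable
    apply hgcont.mono
    rw [uIcc_of_le hsu]
    exact fun v hv => le_trans hs hv.1
  have ha0 : a 0 = 0 := by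
    have := hxeq 0 Set.self_mem_Ici
    rw [hx0] at this; linarith
  have hb0 : bε 0 = 0 := by rw [hbeq]; simp
  have hbdiff : ∀ s u : ℝ, 0 ≤ s → s ≤ u → bε u - bε s = ε * ∫ v in s..u, g v := by
    intro s u hs hsu
    rw [hbeq, hbeq, ← mul_sub]
    congr 1
    rw [← intervalIntegral.integral_add_adjacent_intervals (hgint 0 s le_rfl hs)
      (hgint s u hs hsu)]
    ring
  have hbmono : ∀ s u : ℝ, 0 ≤ s → s ≤ u → bε s ≤ bε u := by
    intro s u hs hsu
    have h1 : 0 ≤ ∫ v in s..u, g v :=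
      intervalIntegral.integral_nonneg hsu (fun v hv => hgnn v (le_trans hs hv.1))
    nlinarith [hbdiff s u hs hsu]
  have hbnn : ∀ s : ℝ, 0 ≤ s → 0 ≤ bε s := by
    intro s hs; rw [← hb0]; exact hbmono 0 s le_rfl hs
  have hbf : ∀ s : ℝ, 0 ≤ s → -f s < bε s := by
    intro s hs
    have h1 := hypos s hs
    have h2 := hyeq s hs
    rw [← hbeq] at h2
    linarith
  intro t ht
  -- lower bound: a t ≤ bε t
  have hlow : a t ≤ bε t := by
    by_contra hcon
    push_neg at hcon
    set T : Set ℝ := Icc 0 t ∩ a ⁻¹' {a t} with hT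
    have hTt : t ∈ T := ⟨⟨ht, le_rfl⟩, rfl⟩
    have hTclosed : IsClosed T :=
      (hacont.mono (fun v hv => hv.1)).preimage_isClosed_of_isClosed isClosed_Icc
        isClosed_singleton
    have hTbdd : BddBelow T := ⟨0, fun v hv => hv.1.1⟩
    have hs1T : sInf T ∈ T := hTclosed.csInf_mem ⟨t, hTt⟩ hTbdd
    set s1 := sInf T
    obtain ⟨⟨hs10, hs1t⟩, hs1a⟩ := hs1T
    have hs1a' : a s1 = a t := hs1a
    rcases eq_or_lt_of_le hs10 with h0 | h0
    · have : a t = 0 := by rw [← hs1a', ← h0, ha0]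
      have := hbnn t ht
      linarith
    · have hx1 : 0 < x s1 := by
        have hxe := hxeq s1 hs10
        have h1 := hbf s1 hs10
        have h2 := hbmono s1 t hs10 hs1t
        rw [hxe, hs1a']
        linarith
      have hev := hloc s1 hs10 hx1
      obtain ⟨δ, hδ, hball⟩ := Metric.mem_nhdsWithin_iff.1 hev
      set u := max 0 (s1 - δ/2) with hu
      have hu0 : 0 ≤ u := le_max_left _ _
      have hus1 : u < s1 := max_lt h0 (by linarith)
      have hud : dist u s1 < δ := by
        rw [Real.dist_eq, abs_of_nonpos (by linarith)]
        have : s1 - δ/2 ≤ u := le_max_right _ _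
        linarith
      have hau : a u = a s1 := hball ⟨Metric.mem_ball.2 hud, hu0⟩
      have huT : u ∈ T := ⟨⟨hu0, le_trans hus1.le hs1t⟩, by
        simp only [mem_preimage, mem_singleton_iff]; rw [hau, hs1a']⟩
      have := csInf_le hTbdd huT
      linarith
  -- upper bound for each C > 0
  have hkey : ∀ C : ℝ, 0 < C → bε t - a t ≤ ε * C ^ (-α) * t + C := by
    intro C hC
    by_contra hcon
    push_neg at hcon
    set β := ε * C ^ (-α) with hβdef
    have hβ : 0 ≤ β := mul_nonneg hε.le (Real.rpow_nonneg hC.le _)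
    set S : Set ℝ := {s | s ∈ Icc 0 t ∧ bε s ≤ a s + β * s + C} with hS
    have ht' : (0:ℝ) ≤ t := ht
    have hbcont : ContinuousOn bε (Icc 0 t) := by
      have hint0t : IntegrableOn g (uIcc 0 t) volume := by
        rw [uIcc_of_le ht']
        exact ((hgcont.mono (fun v hv => hv.1))).integrableOn_compact isCompact_Icc
      have h1 : ContinuousOn (fun s => ∫ v in (0:ℝ)..s, g v) (Icc 0 t) := by
        have h := intervalIntegral.continuousOn_primitive_interval hint0t
        rwa [uIcc_of_le ht'] at h
      exact (continuousOn_const.mul h1).congr (fun s _ => hbeq s)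
    have hSclosed : IsClosed S := by
      have : S = Icc 0 t ∩ {s | bε s - (a s + β * s + C) ≤ 0} := by
        ext s; simp [hS, sub_nonpos]
      rw [this]
      have hcc : ContinuousOn (fun s => bε s - (a s + β * s + C)) (Icc 0 t) := by
        have hsub : Icc (0:ℝ) t ⊆ Ici 0 := fun v hv => hv.1
        exact hbcont.sub (((hacont.mono hsub).add
          (continuousOn_const.mul continuousOn_id)).add continuousOn_const)
      have : {s | bε s - (a s + β * s + C) ≤ 0}
          = (fun s => bε s - (a s + β * s + C)) ⁻¹' Iic 0 := rfl
      rw [this]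
      exact hcc.preimage_isClosed_of_isClosed isClosed_Icc isClosed_Iic
    have h0S : (0:ℝ) ∈ S := by
      refine ⟨⟨le_rfl, ht⟩, ?_⟩
      rw [hb0, ha0]; nlinarith
    have hSbdd : BddAbove S := ⟨t, fun v hv => hv.1.2⟩
    have hs0S : sSup S ∈ S := hSclosed.csSup_mem ⟨0, h0S⟩ hSbdd
    set s0 := sSup S
    obtain ⟨⟨hs00, hs0t⟩, hs0b⟩ := hs0S
    have htS : t ∉ S := by
      intro hmem
      have := hmem.2
      linarith
    have hs0lt : s0 < t := lt_of_le_of_ne hs0t (fun h => htS (h ▸ ⟨⟨hs00, hs0t⟩, hs0b⟩))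
    have hyC : ∀ s, s0 < s → s ≤ t → C ≤ yε s := by
      intro s hs0s hst
      have hs0' : 0 ≤ s := le_trans hs00 hs0s.le
      have hnS : s ∉ S := fun hmem => absurd (le_csSup hSbdd hmem) (not_le.2 hs0s)
      have hgt : a s + β * s + C < bε s := by
        by_contra hle
        exact hnS ⟨⟨hs0', hst⟩, not_lt.1 hle⟩
      have hye := hyeq s hs0'
      rw [← hbeq] at hye
      have hxs := hxnn s hs0'
      rw [hxeq s hs0'] at hxs
      have hβs : 0 ≤ β * s := mul_nonneg hβ hs0'
      linarith
    have hyC0 : C ≤ yε s0 := by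
      have htend : Tendsto yε (nhdsWithin s0 (Ioi s0)) (nhds (yε s0)) := by
        apply ((hycont s0 hs00).mono ?_).tendsto
        exact fun v hv => le_trans hs00 (le_of_lt hv)
      refine ge_of_tendsto htend ?_
      have hmem : Ioc s0 t ∈ nhdsWithin s0 (Ioi s0) := by
        rw [← Ioi_inter_Iic]
        exact inter_mem_nhdsWithin _ (Iic_mem_nhds hs0lt)
      filter_upwards [hmem] with s hs
      exact hyC s hs.1 hs.2
    have hyCIcc : ∀ v ∈ Icc s0 t, C ≤ yε v := by
      intro v hv
      rcases eq_or_lt_of_le hv.1 with h | h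
      · rw [← h]; exact hyC0
      · exact hyC v h hv.2
    have hint : bε t - bε s0 ≤ β * (t - s0) := by
      rw [hbdiff s0 t hs00 hs0t]
      have hmono : ∫ v in s0..t, g v ≤ ∫ v in s0..t, C ^ (-α) := by
        apply intervalIntegral.integral_mono_on hs0t (hgint s0 t hs00 hs0t)
          intervalIntegrable_const
        intro v hv
        have hv0 : 0 ≤ v := le_trans hs00 hv.1
        have hyv := hypos v hv0
        have hCy := hyCIcc v hv
        simp only [hgdef]
        rw [Real.rpow_neg hyv.le, Real.rpow_neg hC.le]
        exact inv_anti₀ (Real.rpow_pos_of_pos hC _)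
          (Real.rpow_le_rpow hC.le hCy (by linarith))
      rw [intervalIntegral.integral_const, smul_eq_mul] at hmono
      calc ε * ∫ v in s0..t, g v ≤ ε * ((t - s0) * C ^ (-α)) :=
            mul_le_mul_of_nonneg_left hmono hε.le
        _ = β * (t - s0) := by rw [hβdef]; ring
    have haa : a s0 ≤ a t := hamono hs00 ht hs0t
    nlinarith
  constructor
  · linarith
  · rcases eq_or_lt_of_le (show (0:ℝ) ≤ t from ht) with h0 | h0
    · rw [← h0]
      have hz : (α * ε * (0:ℝ)) ^ (1/(1+α)) = 0 := by
        rw [mul_zero]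
        exact Real.zero_rpow (by positivity)
      rw [hz, mul_zero, hb0, ha0]
      norm_num
    · have hα0 : α ≠ 0 := by positivity
      have hne : (1:ℝ) + α ≠ 0 := by positivity
      set A := α * ε * t with hA
      have hApos : 0 < A := by positivity
      set C := A ^ (1/(1+α)) with hC
      have hCpos : 0 < C := Real.rpow_pos_of_pos hApos _
      have hkey' := hkey C hCpos
      have h2 : C ^ (-α) = A ^ ((1/(1+α)) * (-α)) := by
        rw [hC, ← Real.rpow_mul hApos.le]
      have hexp : (1:ℝ)/(1+α) = 1 + (1/(1+α)) * (-α) := by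
        field_simp
        ring
      have h3 : C = A * A ^ ((1/(1+α)) * (-α)) := by
        rw [hC]
        conv_lhs => rw [hexp]
        rw [Real.rpow_add hApos, Real.rpow_one]
      have h4 : ε * A ^ ((1/(1+α)) * (-α)) * t = (1/α) * C := by
        rw [h3, hA]
        field_simp
      calc bε t - a t ≤ ε * C ^ (-α) * t + C := hkey'
        _ = (1 + 1/α) * C := by rw [h2, h4]; ring
end

section
/- Suppose f is a nonnegative function defined for all sufficiently large x, locally integrable, such that the limit as x → ∞ of (∫^x f(y)² dy − f(x)) exists and is finite (for some fixed lower integration bound). Then f(x) → 0 as x → ∞ and ∫^∞ f(y)² dy is finite. -/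
open Set Filter MeasureTheory intervalIntegral

/-- if `f ≥ 0` for `x ≥ x₀`, `f²` is locally integrable, and
`∫_{x₀}^x f² - f x` converges to a finite limit as `x → ∞`, then `f x → 0`
and `∫_{x₀}^∞ f²` is finite. -/
theorem tendsto_zero_of_integral_sub_tendsto (f : ℝ → ℝ) (x₀ : ℝ)
    (hpos : ∀ x ∈ Set.Ici x₀, 0 ≤ f x)
    (hloc : ∀ x ∈ Set.Ici x₀, IntervalIntegrable (fun y => f y ^ 2) volume x₀ x)
    (L : ℝ)
    (hlim : Tendsto (fun x => (∫ y in x₀..x, f y ^ 2) - f x) atTop (nhds L)) :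
    Tendsto f atTop (nhds 0) ∧ IntegrableOn (fun y => f y ^ 2) (Set.Ici x₀) volume := by
  set F : ℝ → ℝ := fun x => ∫ y in x₀..x, f y ^ 2 with hF
  have hlim' : Tendsto (fun x => F x - f x) atTop (nhds L) := hlim
  -- key growth inequality
  have key : ∀ a x c : ℝ, x₀ ≤ a → a ≤ x → 0 ≤ c → (∀ y ∈ Icc a x, c ≤ f y) →
      F a + (x - a) * c ^ 2 ≤ F x := by
    intro a x c ha hax hc hcf
    have hax₀ : x₀ ≤ x := ha.trans hax
    have hint : IntervalIntegrable (fun y => f y ^ 2) volume a x :=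
      ((hloc a ha).symm.trans (hloc x hax₀))
    have hsplit : F x = F a + ∫ y in a..x, f y ^ 2 := by
      rw [hF]
      exact (intervalIntegral.integral_add_adjacent_intervals (hloc a ha) hint).symm
    have hmono : ∫ y in a..x, (c:ℝ) ^ 2 ≤ ∫ y in a..x, f y ^ 2 := by
      apply intervalIntegral.integral_mono_on hax intervalIntegrable_const hint
      intro y hy
      exact pow_le_pow_left₀ hc (hcf y hy) 2
    rw [intervalIntegral.integral_const, smul_eq_mul] at hmono
    rw [hsplit]
    linarith
  have Fmono : ∀ a b : ℝ, x₀ ≤ a → a ≤ b → F a ≤ F b := by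
    intro a b ha hab
    have := key a b 0 ha hab le_rfl (fun y hy => hpos y (ha.trans hy.1))
    simpa using this
  have hF'mono : Monotone (fun x => F (max x x₀)) := fun a b hab =>
    Fmono _ _ (le_max_right _ _) (max_le_max hab le_rfl)
  -- boundedness of `F`
  have hbdd : BddAbove (Set.range (fun x => F (max x x₀))) := by
    by_contra hbd
    have htop' : Tendsto (fun x => F (max x x₀)) atTop atTop :=
      tendsto_atTop_atTop_of_monotone' hF'mono hbd
    have htop : Tendsto F atTop atTop := by
      apply htop'.congr'
      filter_upwards [eventually_ge_atTop x₀] with x hx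
      rw [max_eq_left hx]
    have h1 : ∀ᶠ y in atTop, F y - L - 1 ≤ f y := by
      filter_upwards [hlim'.eventually (eventually_le_nhds (by linarith : L < L + 1))] with y hy
      linarith
    have h2 : ∀ᶠ y in atTop, 1 ≤ F y - L - 1 := by
      filter_upwards [htop.eventually_ge_atTop (L + 2)] with y hy; linarith
    obtain ⟨a, ha⟩ := eventually_atTop.mp ((h1.and h2).and (eventually_ge_atTop x₀))
    set g : ℕ → ℝ := fun n => Nat.rec a (fun _ x => x + 1/(2 * (F x - L - 1))) n with hg
    have hgs : ∀ n, g (n+1) = g n + 1/(2 * (F (g n) - L - 1)) := fun n => rfl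
    have main : ∀ n, a ≤ g n ∧ g n + 2*(2/3:ℝ)^n ≤ a + 2 ∧ (3/2:ℝ)^n ≤ F (g n) - L - 1 := by
      intro n; induction n with
      | zero =>
        have hg0 : g 0 = a := rfl
        refine ⟨le_of_eq hg0, by rw [hg0]; norm_num, by rw [hg0]; simpa using (ha a le_rfl).1.2⟩
      | succ n ih =>
        obtain ⟨hga, hgb, hgu⟩ := ih
        have hp32 : (0:ℝ) < (3/2:ℝ)^n := by positivity
        have hp23 : (0:ℝ) < (2/3:ℝ)^n := by positivity
        have h23 : (2/3:ℝ)^n * (3/2)^n = 1 := by rw [← mul_pow]; norm_num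
        have hupos : (0:ℝ) < F (g n) - L - 1 := lt_of_lt_of_le hp32 hgu
        have hstep : g n ≤ g (n+1) := by
          rw [hgs]
          have : 0 < 1/(2*(F (g n) - L - 1)) := by positivity
          linarith
        have hax₀ : x₀ ≤ g n := (ha (g n) hga).2
        have hkey := key (g n) (g (n+1)) (F (g n) - L - 1) hax₀ hstep hupos.le ?_
        · have hδ : (g (n+1) - g n) * (F (g n) - L - 1)^2 = (F (g n) - L - 1)/2 := by
            rw [hgs]; field_simp; ring
          refine ⟨hga.trans hstep, ?_, ?_⟩
          · have hub : 1/(2*(F (g n) - L - 1)) ≤ (1/2)*(2/3)^n := by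
              rw [div_le_iff₀ (by positivity)]
              nlinarith
            rw [hgs]
            have : (2:ℝ)*(2/3:ℝ)^(n+1) = (4/3)*(2/3)^n := by ring
            nlinarith
          · have h32 : (3/2:ℝ)^(n+1) = (3/2)*(3/2)^n := by ring
            have hk2 : F (g n) + (F (g n) - L - 1)/2 ≤ F (g (n+1)) := by
              rw [← hδ]; exact hkey
            linarith [hk2, hgu, h32]
        · intro y hy
          have hya : a ≤ y := hga.trans hy.1
          have huf := (ha y hya).1.1
          have := Fmono (g n) y hax₀ hy.1
          linarith
    obtain ⟨n, hn⟩ := pow_unbounded_of_one_lt (F (a+2) - L - 1) (by norm_num : (1:ℝ) < 3/2)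
    obtain ⟨hga, hgb, hgu⟩ := main n
    have hp23 : (0:ℝ) < (2/3:ℝ)^n := by positivity
    have hle : g n ≤ a + 2 := by nlinarith
    have := Fmono (g n) (a+2) ((ha (g n) hga).2) hle
    linarith
  -- convergence of `F` and of `f`
  set M : ℝ := ⨆ x, F (max x x₀) with hM
  have hM' : Tendsto (fun x => F (max x x₀)) atTop (nhds M) :=
    tendsto_atTop_ciSup hF'mono hbdd
  have hMF : Tendsto F atTop (nhds M) := by
    apply hM'.congr'
    filter_upwards [eventually_ge_atTop x₀] with x hx
    rw [max_eq_left hx]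
  have hFle : ∀ x, x₀ ≤ x → F x ≤ M := by
    intro x hx
    have := le_ciSup hbdd x
    simpa [max_eq_left hx] using this
  have hf : Tendsto f atTop (nhds (M - L)) := by
    have := hMF.sub hlim'
    apply this.congr
    intro x; ring
  have hk0 : 0 ≤ M - L := by
    apply ge_of_tendsto hf
    filter_upwards [eventually_ge_atTop x₀] with x hx
    exact hpos x hx
  have hk : M - L = 0 := by
    by_contra hne
    have hkpos : 0 < M - L := lt_of_le_of_ne hk0 (Ne.symm hne)
    have hev : ∀ᶠ y in atTop, (M - L)/2 ≤ f y :=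
      hf.eventually (eventually_ge_nhds (by linarith))
    obtain ⟨b, hb⟩ := eventually_atTop.mp (hev.and (eventually_ge_atTop x₀))
    have hbx : x₀ ≤ b := (hb b le_rfl).2
    obtain ⟨k, hkdef⟩ : ∃ k : ℝ, k = (M - L)/2 := ⟨_, rfl⟩
    rw [← hkdef] at hev hb
    have hkp : 0 < k := by rw [hkdef]; positivity
    obtain ⟨x, hx⟩ : ∃ x : ℝ, x = b + (M - F b + 1)/k^2 := ⟨_, rfl⟩
    have hxb : b ≤ x := by
      have h1 : F b ≤ M := hFle b hbx
      have : 0 ≤ (M - F b + 1)/k^2 := div_nonneg (by linarith) (by positivity)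
      linarith
    have hkey := key b x k hbx hxb hkp.le (fun y hy => (hb y (hy.1)).1)
    have hxx : (x - b) * k^2 = M - F b + 1 := by
      rw [hx]; field_simp; ring
    have := hFle x (hbx.trans hxb)
    linarith
  rw [hk] at hf
  refine ⟨hf, ?_⟩
  -- integrability
  rw [integrableOn_Ici_iff_integrableOn_Ioi]
  apply MeasureTheory.integrableOn_Ioi_of_intervalIntegral_norm_bounded M x₀
    (fun i : ℝ => (hloc (max i x₀) (Set.mem_Ici.mpr (le_max_right _ _))).1)
    (tendsto_atTop_mono (fun i => le_max_left i x₀) tendsto_id)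
  filter_upwards [eventually_ge_atTop x₀] with i hi
  rw [max_eq_left hi]
  have : (∫ y in x₀..i, ‖f y ^ 2‖) = ∫ y in x₀..i, f y ^ 2 := by
    apply intervalIntegral.integral_congr
    intro y _
    exact Real.norm_of_nonneg (sq_nonneg _)
  rw [this, ← congrFun hF i]
  exact hFle i hi
end

section
/- Let e, f be nonnegative functions defined on an interval (0, z₀), with e locally integrable, such that ∫_z^{z₀} e(u) du → +∞ as z → 0⁺, and such that the limit as z → 0⁺ of (∫_z^{z₀} f(u)² e(u) du − f(z)) exists and is finite. Then f(z) → 0 as z → 0⁺ and ∫_{0⁺}^{z₀} f(u)² e(u) du is finite. -/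
open Set Filter MeasureTheory

/-- if `e, f ≥ 0` on `(0, z₀)`, `∫_z^{z₀} e → ∞` as `z → 0⁺`, and
`∫_z^{z₀} f² e − f z` converges to a finite limit as `z → 0⁺`, then `f z → 0`
as `z → 0⁺` and `∫_{0}^{z₀} f² e` is finite. -/
theorem tendsto_zero_of_integral_sub_tendsto_zero (e f : ℝ → ℝ) (z₀ : ℝ) (hz₀ : 0 < z₀)
    (he : ∀ u ∈ Set.Ioo 0 z₀, 0 ≤ e u) (hfpos : ∀ u ∈ Set.Ioo 0 z₀, 0 ≤ f u)
    (hfmeas : Measurable f)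
    (heloc : ∀ z ∈ Set.Ioo 0 z₀, IntegrableOn e (Set.Ioc z z₀) volume)
    (hfloc : ∀ z ∈ Set.Ioo 0 z₀, IntegrableOn (fun u => f u ^ 2 * e u) (Set.Ioc z z₀) volume)
    (hediv : Tendsto (fun z => ∫ u in Set.Ioc z z₀, e u) (nhdsWithin 0 (Set.Ioi 0)) atTop)
    (L : ℝ)
    (hlim : Tendsto (fun z => (∫ u in Set.Ioc z z₀, f u ^ 2 * e u) - f z)
      (nhdsWithin 0 (Set.Ioi 0)) (nhds L)) :
    Tendsto f (nhdsWithin 0 (Set.Ioi 0)) (nhds 0) ∧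
      IntegrableOn (fun u => f u ^ 2 * e u) (Set.Ioo 0 z₀) volume := by
  obtain ⟨I, hIdef⟩ : ∃ I : ℝ → ℝ, ∀ z, I z = ∫ u in Set.Ioc z z₀, f u ^ 2 * e u :=
    ⟨_, fun z => rfl⟩
  obtain ⟨E, hEdef⟩ : ∃ E : ℝ → ℝ, ∀ z, E z = ∫ u in Set.Ioc z z₀, e u := ⟨_, fun z => rfl⟩
  have hlim' : Tendsto (fun z => I z - f z) (nhdsWithin 0 (Set.Ioi 0)) (nhds L) := by
    simp only [hIdef]; exact hlim
  have hediv' : Tendsto E (nhdsWithin 0 (Set.Ioi 0)) atTop := by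
    have : E = fun z => ∫ u in Set.Ioc z z₀, e u := funext hEdef
    rw [this]; exact hediv
  have hsub : ∀ z z' : ℝ, 0 < z → z' < z₀ → Set.Ioc z z' ⊆ Set.Ioo 0 z₀ := by
    intro z z' hz hz' u hu
    exact ⟨hz.trans hu.1, lt_of_le_of_lt hu.2 hz'⟩
  have hgnn : ∀ u ∈ Set.Ioo 0 z₀, 0 ≤ f u ^ 2 * e u := fun u hu =>
    mul_nonneg (sq_nonneg _) (he u hu)
  have hgloc : ∀ z z' : ℝ, 0 < z → z ≤ z' → z' < z₀ →
      IntegrableOn (fun u => f u ^ 2 * e u) (Set.Ioc z z') volume := by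
    intro z z' hz hzz hz'
    exact (hfloc z ⟨hz, lt_of_le_of_lt hzz hz'⟩).mono_set (Set.Ioc_subset_Ioc_right hz'.le)
  have heloc' : ∀ z z' : ℝ, 0 < z → z ≤ z' → z' < z₀ →
      IntegrableOn e (Set.Ioc z z') volume := by
    intro z z' hz hzz hz'
    exact (heloc z ⟨hz, lt_of_le_of_lt hzz hz'⟩).mono_set (Set.Ioc_subset_Ioc_right hz'.le)
  have hIsplit : ∀ z z' : ℝ, 0 < z → z ≤ z' → z' < z₀ →
      I z = (∫ u in Set.Ioc z z', f u ^ 2 * e u) + I z' := by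
    intro z z' hz hzz hz'
    rw [hIdef, hIdef, ← MeasureTheory.setIntegral_union (Set.Ioc_disjoint_Ioc_of_le le_rfl)
      measurableSet_Ioc (hgloc z z' hz hzz hz')
      (hfloc z' ⟨hz.trans_le hzz, hz'⟩),
      Set.Ioc_union_Ioc_eq_Ioc hzz hz'.le]
  have hEsplit : ∀ z z' : ℝ, 0 < z → z ≤ z' → z' < z₀ →
      E z = (∫ u in Set.Ioc z z', e u) + E z' := by
    intro z z' hz hzz hz'
    rw [hEdef, hEdef, ← MeasureTheory.setIntegral_union (Set.Ioc_disjoint_Ioc_of_le le_rfl)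
      measurableSet_Ioc (heloc' z z' hz hzz hz')
      (heloc z' ⟨hz.trans_le hzz, hz'⟩),
      Set.Ioc_union_Ioc_eq_Ioc hzz hz'.le]
  have hIant : ∀ z z' : ℝ, 0 < z → z ≤ z' → z' < z₀ → I z' ≤ I z := by
    intro z z' hz hzz hz'
    have h0 : 0 ≤ ∫ u in Set.Ioc z z', f u ^ 2 * e u :=
      setIntegral_nonneg measurableSet_Ioc (fun u hu => hgnn u (hsub z z' hz hz' hu))
    have := hIsplit z z' hz hzz hz'
    linarith
  have hkey : ∀ z z' c : ℝ, 0 < z → z ≤ z' → z' < z₀ → 0 ≤ c →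
      (∀ u ∈ Set.Ioc z z', c ≤ f u) → c ^ 2 * (E z - E z') ≤ I z - I z' := by
    intro z z' c hz hzz hz' hc hcf
    have h1 : I z - I z' = ∫ u in Set.Ioc z z', f u ^ 2 * e u := by
      have := hIsplit z z' hz hzz hz'; linarith
    have h2 : E z - E z' = ∫ u in Set.Ioc z z', e u := by
      have := hEsplit z z' hz hzz hz'; linarith
    rw [h1, h2, ← MeasureTheory.integral_const_mul]
    refine setIntegral_mono_on ((heloc' z z' hz hzz hz').const_mul _)
      (hgloc z z' hz hzz hz') measurableSet_Ioc ?_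
    intro u hu
    have hu' := hsub z z' hz hz' hu
    have : c ^ 2 ≤ f u ^ 2 := pow_le_pow_left₀ hc (hcf u hu) 2
    exact mul_le_mul_of_nonneg_right this (he u hu')
  have hIcont : ∀ z z₁ : ℝ, 0 < z → z ≤ z₁ → z₁ < z₀ → ContinuousOn I (Set.Icc z z₁) := by
    intro z z₁ hz hzz hz₁
    have ha0 : 0 < z / 2 := by linarith
    have haz : z / 2 < z := by linarith
    have haz₀ : z / 2 < z₀ := by linarith
    have hint : IntegrableOn (fun u => f u ^ 2 * e u) (Set.Icc (z / 2) z₀) volume := by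
      rw [integrableOn_Icc_iff_integrableOn_Ioc]
      exact hfloc _ ⟨ha0, haz₀⟩
    have hcont := intervalIntegral.continuousOn_primitive (f := fun u => f u ^ 2 * e u)
      (a := z / 2) (b := z₀) (μ := volume) hint
    have hss : Set.Icc z z₁ ⊆ Set.Icc (z / 2) z₀ := Set.Icc_subset_Icc haz.le hz₁.le
    have hcont2 : ContinuousOn (fun w => (∫ u in Set.Ioc (z / 2) z₀, f u ^ 2 * e u)
        - ∫ u in Set.Ioc (z / 2) w, f u ^ 2 * e u) (Set.Icc z z₁) :=
      continuousOn_const.sub (hcont.mono hss)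
    refine hcont2.congr ?_
    intro w hw
    have hw0 : 0 < w := hz.trans_le hw.1
    have hwz₀ : w < z₀ := lt_of_le_of_lt hw.2 hz₁
    have h1 : I (z / 2) = (∫ u in Set.Ioc (z / 2) w, f u ^ 2 * e u) + I w :=
      hIsplit _ w ha0 (haz.le.trans hw.1) hwz₀
    have h2 : I (z / 2) = ∫ u in Set.Ioc (z / 2) z₀, f u ^ 2 * e u := hIdef _
    simp only []
    rw [← h2]
    linarith
  -- main case split
  by_cases hbdd : ∃ C, ∀ z ∈ Set.Ioo 0 z₀, I z ≤ C
  · -- bounded case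
    obtain ⟨C, hC⟩ := hbdd
    have hne : (I '' Set.Ioo 0 z₀).Nonempty :=
      ⟨I (z₀ / 2), ⟨z₀ / 2, ⟨by linarith, by linarith⟩, rfl⟩⟩
    have hba : BddAbove (I '' Set.Ioo 0 z₀) := ⟨C, by rintro y ⟨x, hx, rfl⟩; exact hC x hx⟩
    set M := sSup (I '' Set.Ioo 0 z₀) with hM
    have hle : ∀ z ∈ Set.Ioo 0 z₀, I z ≤ M := fun z hz => le_csSup hba ⟨z, hz, rfl⟩
    have hMtendsto : Tendsto I (nhdsWithin 0 (Set.Ioi 0)) (nhds M) := by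
      refine tendsto_order.2 ⟨fun b hb => ?_, fun b hb => ?_⟩
      · obtain ⟨y, ⟨zb, hzb, rfl⟩, hby⟩ := exists_lt_of_lt_csSup hne hb
        filter_upwards [Ioo_mem_nhdsGT_of_mem (⟨le_refl 0, hzb.1⟩ : (0:ℝ) ∈ Set.Ico 0 zb)]
          with w hw
        exact hby.trans_le (hIant w zb hw.1 hw.2.le hzb.2)
      · filter_upwards [Ioo_mem_nhdsGT_of_mem (⟨le_refl 0, hz₀⟩ : (0:ℝ) ∈ Set.Ico 0 z₀)]
          with w hw
        exact (hle w hw).trans_lt hb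
    have hftends : Tendsto f (nhdsWithin 0 (Set.Ioi 0)) (nhds (M - L)) := by
      have h := hMtendsto.sub hlim'
      simp only [sub_sub_cancel] at h
      exact h
    have hf0 : ∀ᶠ z in nhdsWithin 0 (Set.Ioi 0), 0 ≤ f z := by
      filter_upwards [Ioo_mem_nhdsGT_of_mem (⟨le_refl 0, hz₀⟩ : (0:ℝ) ∈ Set.Ico 0 z₀)]
        with w hw using hfpos w hw
    have hc0 : 0 ≤ M - L := ge_of_tendsto hftends hf0
    have hcL : M - L ≤ 0 := by
      by_contra hpos
      push_neg at hpos
      set c := (M - L) / 2 with hcdef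
      have hcpos : 0 < c := by simp only [hcdef]; linarith
      have hev : ∀ᶠ z in nhdsWithin 0 (Set.Ioi 0), c < f z :=
        hftends.eventually (eventually_gt_nhds (by simp only [hcdef]; linarith))
      obtain ⟨u, hu, husub⟩ := mem_nhdsGT_iff_exists_Ioc_subset.mp hev
      set z₂ := min u (z₀ / 2) with hz₂def
      have hz₂0 : 0 < z₂ := lt_min hu (by linarith)
      have hz₂z₀ : z₂ < z₀ := (min_le_right _ _).trans_lt (by linarith)
      have hbound : ∀ z, 0 < z → z ≤ z₂ → E z ≤ E z₂ + (C - I z₂) / c ^ 2 := by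
        intro z hz hzz
        have hcf : ∀ v ∈ Set.Ioc z z₂, c ≤ f v := by
          intro v hv
          exact (husub ⟨hv.1.trans_le' hz.le, hv.2.trans (min_le_left _ _)⟩).le
        have h1 := hkey z z₂ c hz hzz hz₂z₀ hcpos.le hcf
        have h2 : I z ≤ C := hC z ⟨hz, lt_of_le_of_lt hzz hz₂z₀⟩
        have h3 : c ^ 2 * (E z - E z₂) ≤ C - I z₂ := by linarith
        have h4 : E z - E z₂ ≤ (C - I z₂) / c ^ 2 := by
          rw [le_div_iff₀ (pow_pos hcpos 2)]; linarith
        linarith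
      have hcontr : ∀ᶠ z in nhdsWithin 0 (Set.Ioi 0),
          (E z₂ + (C - I z₂) / c ^ 2 < E z ∧ z ∈ Set.Ioo 0 z₂) :=
        (hediv'.eventually_gt_atTop _).and
          (Filter.eventually_of_mem (Ioo_mem_nhdsGT_of_mem (⟨le_refl 0, hz₂0⟩ : (0:ℝ) ∈ Set.Ico 0 z₂)) (fun _ h => h))
      obtain ⟨z, hz1, hz2⟩ := hcontr.exists
      have := hbound z hz2.1 hz2.2.le
      linarith
    have hML : M - L = 0 := le_antisymm hcL hc0
    rw [hML] at hftends
    refine ⟨hftends, ?_⟩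
    -- integrability
    have haseq : ∀ n : ℕ, (0:ℝ) < z₀ / (n + 2) ∧ z₀ / (n + 2) < z₀ := by
      intro n
      constructor
      · positivity
      · apply div_lt_self hz₀
        have : (0:ℝ) ≤ (n:ℝ) := Nat.cast_nonneg n
        linarith
    have hIoc : IntegrableOn (fun u => f u ^ 2 * e u) (Set.Ioc 0 z₀) volume := by
      refine MeasureTheory.integrableOn_Ioc_of_intervalIntegral_norm_bounded_left
        (l := atTop) (a := fun n : ℕ => z₀ / (n + 2)) (I := M)
        (fun n => hfloc _ ⟨(haseq n).1, (haseq n).2⟩) ?_ ?_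
      · have h2 : Tendsto (fun n : ℕ => (n:ℝ) + 2) atTop atTop :=
          tendsto_atTop_add_const_right _ 2 tendsto_natCast_atTop_atTop
        exact Tendsto.div_atTop tendsto_const_nhds h2
      · refine Filter.Eventually.of_forall fun n => ?_
        have hae : ∀ᵐ x : ℝ, x ∈ Set.Ioc (z₀ / (n + 2)) z₀ → ‖f x ^ 2 * e x‖ = f x ^ 2 * e x := by
          have h0 : (volume {z₀} : ENNReal) = 0 := Real.volume_singleton
          have hnm : ∀ᵐ x : ℝ, x ∉ ({z₀} : Set ℝ) := measure_eq_zero_iff_ae_notMem.mp h0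
          filter_upwards [hnm] with x hx hxmem
          have hxz₀ : x ≠ z₀ := by simpa using hx
          have : x ∈ Set.Ioo 0 z₀ := ⟨(haseq n).1.trans hxmem.1, lt_of_le_of_ne hxmem.2 hxz₀⟩
          exact Real.norm_of_nonneg (hgnn x this)
        have heq : (∫ x in Set.Ioc (z₀ / (n + 2)) z₀, ‖f x ^ 2 * e x‖) = I (z₀ / (n + 2)) := by
          rw [hIdef]
          exact setIntegral_congr_ae measurableSet_Ioc hae
        rw [heq]
        exact hle _ ⟨(haseq n).1, (haseq n).2⟩
    exact hIoc.mono_set Set.Ioo_subset_Ioc_self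
  · -- unbounded case: contradiction
    exfalso
    push_neg at hbdd
    have hItop : Tendsto I (nhdsWithin 0 (Set.Ioi 0)) atTop := by
      rw [tendsto_atTop]
      intro b
      obtain ⟨zc, hzc, hbI⟩ := hbdd b
      filter_upwards [Ioo_mem_nhdsGT_of_mem (⟨le_refl 0, hzc.1⟩ : (0:ℝ) ∈ Set.Ico 0 zc)]
        with w hw
      exact hbI.le.trans (hIant w zc hw.1 hw.2.le hzc.2)
    have hev1 : ∀ᶠ z in nhdsWithin 0 (Set.Ioi 0), I z - f z ≤ L + 1 :=
      hlim'.eventually (eventually_le_nhds (lt_add_one L))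
    have hev2 : ∀ᶠ z in nhdsWithin 0 (Set.Ioi 0), max (2 * (L + 1)) 1 ≤ I z :=
      hItop.eventually_ge_atTop _
    obtain ⟨u, hu, husub⟩ := mem_nhdsGT_iff_exists_Ioc_subset.mp (hev1.and hev2)
    set z₁ := min u (z₀ / 2) with hz₁def
    have hz₁0 : 0 < z₁ := lt_min hu (by linarith)
    have hz₁z₀ : z₁ < z₀ := (min_le_right _ _).trans_lt (by linarith)
    have hz₁p : ∀ z, 0 < z → z ≤ z₁ → I z - f z ≤ L + 1 ∧ max (2 * (L + 1)) 1 ≤ I z :=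
      fun z h1 h2 => husub ⟨h1, h2.trans (min_le_left _ _)⟩
    set A := I z₁ with hAdef
    have hA1 : 1 ≤ A := le_trans (le_max_right _ _) (hz₁p z₁ hz₁0 le_rfl).2
    have hA0 : 0 < A := by linarith
    have hfge : ∀ z, 0 < z → z ≤ z₁ → I z / 2 ≤ f z := by
      intro z h1 h2
      obtain ⟨p1, p2⟩ := hz₁p z h1 h2
      have : 2 * (L + 1) ≤ I z := le_trans (le_max_left _ _) p2
      linarith
    have hfge' : ∀ z, 0 < z → z ≤ z₁ → ∀ v ∈ Set.Ioc z z₁, I z₁ / 2 ≤ f v := by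
      intro z h1 h2 v hv
      have hv0 : 0 < v := h1.trans hv.1
      have := hfge v hv0 hv.2
      have := hIant v z₁ hv0 hv.2 hz₁z₀
      linarith
    have claim : ∀ n : ℕ, ∀ z, 0 < z → z ≤ z₁ → I z ≤ 2 ^ n * A →
        E z ≤ E z₁ + 8 / A * (1 - (1 / 2 : ℝ) ^ n) := by
      intro n
      induction n with
      | zero =>
        intro z hz hzz hIz
        have hIz' : I z = A := le_antisymm (by simpa using hIz) (hIant z z₁ hz hzz hz₁z₀)
        have hcf : ∀ v ∈ Set.Ioc z z₁, A / 2 ≤ f v := by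
          intro v hv
          have hv0 : 0 < v := hz.trans hv.1
          have h1 := hfge v hv0 hv.2
          have h2 := hIant v z₁ hv0 hv.2 hz₁z₀
          linarith
        have hk := hkey z z₁ (A / 2) hz hzz hz₁z₀ (by linarith) hcf
        have hpos : (0:ℝ) < (A / 2) ^ 2 := pow_pos (by linarith) 2
        have : E z - E z₁ ≤ 0 := by nlinarith
        simp only [pow_zero, sub_self, mul_zero]
        linarith
      | succ n ih =>
        intro z hz hzz hIz
        have h2n : (1:ℝ) ≤ 2 ^ n := one_le_pow₀ (by norm_num)
        have hB0 : (0:ℝ) < 2 ^ n * A := by positivity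
        by_cases hcase : I z ≤ 2 ^ n * A
        · refine (ih z hz hzz hcase).trans ?_
          have hp : ((1:ℝ) / 2) ^ (n + 1) ≤ (1 / 2) ^ n :=
            pow_le_pow_of_le_one (by norm_num) (by norm_num) (Nat.le_succ n)
          have h8 : (0:ℝ) ≤ 8 / A := by positivity
          nlinarith
        · push_neg at hcase
          have hzlt : z < z₁ := by
            rcases lt_or_eq_of_le hzz with h | h
            · exact h
            · exfalso
              rw [h] at hcase
              nlinarith
          -- IVT
          have hcont := hIcont z z₁ hz hzz hz₁z₀
          have hmem : 2 ^ n * A ∈ Set.Icc (I z₁) (I z) := by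
            constructor
            · rw [← hAdef]; nlinarith
            · exact hcase.le
          obtain ⟨z', hz'mem, hz'val⟩ := intermediate_value_Icc' hzz hcont hmem
          have hz'0 : 0 < z' := hz.trans_le hz'mem.1
          have hz'z₁ : z' ≤ z₁ := hz'mem.2
          -- lower bound for f on Ioc z z'
          set c := 2 ^ n * A / 2 with hcdef
          have hcpos : 0 < c := by positivity
          have hcf : ∀ v ∈ Set.Ioc z z', c ≤ f v := by
            intro v hv
            have hv0 : 0 < v := hz.trans hv.1
            have h1 := hfge v hv0 (hv.2.trans hz'z₁)
            have h2 := hIant v z' hv0 hv.2 (lt_of_le_of_lt hz'z₁ hz₁z₀)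
            rw [hcdef, ← hz'val]
            linarith
          have hk := hkey z z' c hz hz'mem.1 (lt_of_le_of_lt hz'z₁ hz₁z₀) hcpos.le hcf
          have hd : E z - E z' ≤ 4 / (2 ^ n * A) := by
            have h1 : I z - I z' ≤ 2 ^ n * A := by
              rw [hz'val]
              have : (2:ℝ) ^ (n + 1) = 2 * 2 ^ n := by ring
              nlinarith [hIz]
            have h2 : c ^ 2 * (E z - E z') ≤ 2 ^ n * A := le_trans hk h1
            rw [le_div_iff₀ hB0]
            have hc2 : c ^ 2 = (2 ^ n * A) ^ 2 / 4 := by rw [hcdef]; ring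
            rw [hc2] at h2
            nlinarith [h2, hB0]
          have hih := ih z' hz'0 hz'z₁ (le_of_eq hz'val)
          have heq : 8 / A * (1 - (1 / 2 : ℝ) ^ n) + 4 / (2 ^ n * A)
              = 8 / A * (1 - (1 / 2 : ℝ) ^ (n + 1)) := by
            have h2nne : (2:ℝ) ^ n ≠ 0 := by positivity
            have hAne : A ≠ 0 := ne_of_gt hA0
            field_simp
            have hh : ((1:ℝ) / 2) ^ n * 2 ^ n = 1 := by rw [← mul_pow]; norm_num
            linear_combination (-4 : ℝ) * hh
          linarith
    -- conclude: E bounded on (0, z₁], contradiction with hediv'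
    have hEbound : ∀ z, 0 < z → z ≤ z₁ → E z ≤ E z₁ + 8 / A := by
      intro z hz hzz
      obtain ⟨n, hn⟩ := exists_nat_ge (I z)
      have h1 : I z ≤ 2 ^ n * A := by
        have h2 : (n:ℝ) ≤ 2 ^ n := by
          exact_mod_cast (Nat.lt_two_pow_self (n := n)).le
        calc I z ≤ (n:ℝ) := hn
          _ ≤ 2 ^ n := h2
          _ ≤ 2 ^ n * A := le_mul_of_one_le_right (by positivity) hA1
      have h3 := claim n z hz hzz h1
      have h4 : (0:ℝ) ≤ (1 / 2 : ℝ) ^ n := by positivity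
      have h5 : (0:ℝ) ≤ 8 / A := by positivity
      nlinarith
    have hcontr : ∀ᶠ z in nhdsWithin 0 (Set.Ioi 0),
        (E z₁ + 8 / A < E z ∧ z ∈ Set.Ioo 0 z₁) :=
      (hediv'.eventually_gt_atTop _).and
        (Filter.eventually_of_mem (Ioo_mem_nhdsGT_of_mem (⟨le_refl 0, hz₁0⟩ : (0:ℝ) ∈ Set.Ico 0 z₁)) (fun _ h => h))
    obtain ⟨z, hz1, hz2⟩ := hcontr.exists
    have := hEbound z hz2.1 hz2.2.le
    linarith
end

section
/- Let b > −1, σ > 0, Ĵ > 0. The unique continuous solution φ : (0, ∞) → ℝ of the integral equation φ(z) z^{−b} + ∫₀^z φ(u)² u^{−b} du = σ/Ĵ (for all z > 0, with the integral converging at 0) is φ(z) = z^b / (Ĵ/σ + z^{b+1}/(b+1)). Consequently, exp(−∫_y^z φ(u) du) = (1 + σ Ĵ^{−1} y^{b+1}/(b+1)) / (1 + σ Ĵ^{−1} z^{b+1}/(b+1)) for 0 < y < z. -/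
open Set Filter MeasureTheory Real intervalIntegral

open Topology


section aux
variable {b c : ℝ}

lemma Dpos (hb : -1 < b) (hc : 0 < c) {z : ℝ} (hz : 0 ≤ z) :
    0 < c + z ^ (b + 1) / (b + 1) := by
  have h1 : (0:ℝ) < b + 1 := by linarith
  have h2 : 0 ≤ z ^ (b + 1) := Real.rpow_nonneg hz _
  positivity

lemma hasDerivAt_D (hb : -1 < b) {z : ℝ} (hz : 0 < z) :
    HasDerivAt (fun z : ℝ => c + z ^ (b + 1) / (b + 1)) (z ^ b) z := by
  have h1 : (0:ℝ) < b + 1 := by linarith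
  have := ((Real.hasDerivAt_rpow_const (p := b + 1) (Or.inl hz.ne')).div_const (b+1)).const_add c
  refine this.congr_deriv ?_
  rw [add_sub_cancel_right]
  field_simp

lemma cont_D (hb : -1 < b) : Continuous (fun z : ℝ => c + z ^ (b + 1) / (b + 1)) := by
  have h1 : (0:ℝ) ≤ b + 1 := by linarith
  exact continuous_const.add ((Real.continuous_rpow_const h1).div_const _)

/-- the canonical solution -/
lemma contOn_phi (hb : -1 < b) (hc : 0 < c) :
    ContinuousOn (fun z : ℝ => z ^ b / (c + z ^ (b + 1) / (b + 1))) (Ioi 0) := by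
  apply ContinuousOn.div
  · intro x hx
    exact (Real.continuousAt_rpow_const x b (Or.inl (ne_of_gt hx))).continuousWithinAt
  · exact (cont_D hb).continuousOn
  · intro x hx
    exact (Dpos hb hc (le_of_lt hx)).ne'

lemma integrand_eq (hb : -1 < b) (hc : 0 < c) {u : ℝ} (hu : 0 < u) :
    (u ^ b / (c + u ^ (b + 1) / (b + 1))) ^ 2 * u ^ (-b)
      = u ^ b / (c + u ^ (b + 1) / (b + 1)) ^ 2 := by
  have hD := (Dpos hb hc (le_of_lt hu)).ne'
  rw [div_pow, div_mul_eq_mul_div, sq, mul_assoc, ← Real.rpow_add hu]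
  norm_num

lemma rpow_integrableOn (hb : -1 < b) {z : ℝ} (hz : 0 < z) :
    IntegrableOn (fun u : ℝ => u ^ b) (Ioo (0:ℝ) z) volume := by
  have : IntervalIntegrable (fun u : ℝ => u ^ b) volume 0 z :=
    intervalIntegral.intervalIntegrable_rpow' hb
  exact ((intervalIntegrable_iff_integrableOn_Ioc_of_le hz.le).mp this).mono_set Ioo_subset_Ioc_self

lemma integral_rpow_Ioo (hb : -1 < b) {z : ℝ} (hz : 0 < z) :
    ∫ u in Ioo (0:ℝ) z, u ^ b = z ^ (b + 1) / (b + 1) := by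
  rw [← integral_Ioc_eq_integral_Ioo, ← intervalIntegral.integral_of_le hz.le,
    integral_rpow (Or.inl hb)]
  rw [Real.zero_rpow (by linarith : b + 1 ≠ 0)]
  ring

end aux

section aux2
variable {b c : ℝ}

lemma contOn_g (hb : -1 < b) (hc : 0 < c) :
    ContinuousOn (fun u : ℝ => u ^ b / (c + u ^ (b + 1) / (b + 1)) ^ 2) (Ioi 0) := by
  apply ContinuousOn.div
  · intro x hx
    exact (Real.continuousAt_rpow_const x b (Or.inl (ne_of_gt hx))).continuousWithinAt
  · exact ((cont_D hb).pow 2).continuousOn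
  · intro x hx
    exact pow_ne_zero 2 (Dpos hb hc (le_of_lt hx)).ne'

lemma g_integrableOn (hb : -1 < b) (hc : 0 < c) {z : ℝ} (hz : 0 < z) :
    IntegrableOn (fun u : ℝ => u ^ b / (c + u ^ (b + 1) / (b + 1)) ^ 2) (Ioo (0:ℝ) z) volume := by
  apply Integrable.mono ((rpow_integrableOn hb hz).div_const (c ^ 2))
  · exact ((contOn_g hb hc).mono Ioo_subset_Ioi_self).aestronglyMeasurable measurableSet_Ioo
  · filter_upwards [ae_restrict_mem measurableSet_Ioo] with u hu
    have hu0 : (0:ℝ) < u := hu.1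
    have hD : 0 < c + u ^ (b + 1) / (b + 1) := Dpos hb hc hu0.le
    have hub : (0:ℝ) ≤ u ^ b := Real.rpow_nonneg hu0.le b
    rw [Real.norm_eq_abs, Real.norm_eq_abs, abs_of_nonneg (by positivity),
      abs_of_nonneg (by positivity)]
    apply div_le_div_of_nonneg_left hub (by positivity)
    have hb1 : (0:ℝ) < b + 1 := by linarith
    have h2 : 0 ≤ u ^ (b+1) / (b+1) := by
      have := Real.rpow_nonneg hu0.le (b+1); positivity
    exact pow_le_pow_left₀ hc.le (le_add_of_nonneg_right h2) 2

lemma g_integral (hb : -1 < b) (hc : 0 < c) {z : ℝ} (hz : 0 < z) :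
    ∫ u in Ioo (0:ℝ) z, u ^ b / (c + u ^ (b + 1) / (b + 1)) ^ 2
      = c⁻¹ - (c + z ^ (b + 1) / (b + 1))⁻¹ := by
  have h0 : (0:ℝ) ^ (b+1) = 0 := Real.zero_rpow (by linarith)
  have key := intervalIntegral.integral_eq_sub_of_hasDerivAt_of_le (a := (0:ℝ)) (b := z)
    (f := fun u => -(c + u ^ (b + 1) / (b + 1))⁻¹)
    (f' := fun u => u ^ b / (c + u ^ (b + 1) / (b + 1)) ^ 2) hz.le
    (((cont_D hb).continuousOn.inv₀ (fun x hx => (Dpos hb hc hx.1).ne')).neg)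
    (fun x hx => by
      have := ((hasDerivAt_D (c := c) hb hx.1).inv (Dpos hb hc hx.1.le).ne').neg
      exact this.congr_deriv (by ring))
    (by
      rw [intervalIntegrable_iff_integrableOn_Ioc_of_le hz.le]
      exact (g_integrableOn hb hc (by linarith : (0:ℝ) < z + 1)).mono_set
        (fun x hx => ⟨hx.1, lt_of_le_of_lt hx.2 (by linarith)⟩))
  rw [← integral_Ioc_eq_integral_Ioo, ← intervalIntegral.integral_of_le hz.le, key]
  norm_num [h0]
  ring

end aux2

lemma uniq_aux (b σ J : ℝ) (hb : -1 < b) (hσ : 0 < σ) (hJ : 0 < J)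
    (ψ : ℝ → ℝ) (hcont : ContinuousOn ψ (Set.Ioi 0))
    (hint : ∀ z > (0:ℝ), IntegrableOn (fun u => ψ u ^ 2 * u ^ (-b)) (Set.Ioo 0 z) volume)
    (heq : ∀ z > (0:ℝ), ψ z * z ^ (-b) + ∫ u in Set.Ioo (0:ℝ) z, ψ u ^ 2 * u ^ (-b) = σ / J)
    (z : ℝ) (hz : 0 < z) : ψ z * z ^ (-b) * (J / σ + z ^ (b + 1) / (b + 1)) = 1 := by
  have hb1 : (0:ℝ) < b + 1 := by linarith
  set c : ℝ := J / σ with hcdef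
  have hc : 0 < c := by positivity
  set f : ℝ → ℝ := fun u => ψ u ^ 2 * u ^ (-b) with hfdef
  set I : ℝ → ℝ := fun t => ∫ u in Set.Ioo (0:ℝ) t, f u with hIdef
  set D : ℝ → ℝ := fun t => c + t ^ (b + 1) / (b + 1) with hDdef
  set E : ℝ → ℝ := fun t => (σ / J - I t) * D t - 1 with hEdef
  clear_value c f I D E
  have hf_cont : ContinuousOn f (Ioi 0) := by
    rw [hfdef]
    apply ContinuousOn.mul (hcont.pow 2)
    intro x hx
    exact (Real.continuousAt_rpow_const x (-b) (Or.inl (ne_of_gt hx))).continuousWithinAt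
  have hf_nonneg : ∀ u : ℝ, 0 < u → 0 ≤ f u := by
    intro u hu
    simp only [hfdef]
    have : (0:ℝ) ≤ u ^ (-b) := Real.rpow_nonneg hu.le _
    positivity
  -- additivity
  have h_add : ∀ a s : ℝ, 0 < a → a ≤ s → I s = I a + ∫ u in a..s, f u := by
    intro a s ha has
    have hs : 0 < s := lt_of_lt_of_le ha has
    simp only [hIdef]
    rw [intervalIntegral.integral_of_le has, integral_Ioc_eq_integral_Ioo]
    have hunion : Ioo (0:ℝ) a ∪ Ico a s = Ioo (0:ℝ) s := Ioo_union_Ico_eq_Ioo ha has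
    have h1 : IntegrableOn f (Ioo (0:ℝ) a) volume := hint a ha
    have h2 : IntegrableOn f (Ico a s) volume :=
      ((hint (s+1) (by linarith)).mono_set (fun x hx => ⟨lt_of_lt_of_le ha hx.1,
        hx.2.trans_le (by linarith)⟩))
    have := MeasureTheory.setIntegral_union (f := f) (μ := volume)
      (by
        apply Set.disjoint_left.mpr
        rintro x hx1 hx2
        exact absurd hx1.2 (not_lt.mpr hx2.1)) measurableSet_Ico h1 h2
    rw [hunion] at this
    rw [integral_Ico_eq_integral_Ioo] at this
    exact this
  -- derivative of I
  have hI' : ∀ t : ℝ, 0 < t → HasDerivAt I (f t) t := by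
    intro t ht
    have hat : (0:ℝ) < t / 2 := by linarith
    have hII : IntervalIntegrable f volume (t/2) t := by
      rw [intervalIntegrable_iff_integrableOn_Ioc_of_le (by linarith)]
      exact (hint (t+1) (by linarith)).mono_set
        (fun x hx => ⟨lt_trans hat hx.1, lt_of_le_of_lt hx.2 (by linarith)⟩)
    have hmeas := ContinuousOn.stronglyMeasurableAtFilter (μ := volume) isOpen_Ioi hf_cont t
      (by exact ht)
    have hca : ContinuousAt f t := hf_cont.continuousAt (isOpen_Ioi.mem_nhds ht)
    have hD := (intervalIntegral.integral_hasDerivAt_right hII hmeas hca).const_add (I (t/2))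
    apply hD.congr_of_eventuallyEq
    filter_upwards [isOpen_Ioi.mem_nhds (show t/2 < t by linarith)] with s hs
    exact h_add (t/2) s hat (le_of_lt hs)
  -- bounds
  have hInonneg : ∀ t : ℝ, 0 < t → 0 ≤ I t := by
    intro t ht
    simp only [hIdef]
    exact MeasureTheory.setIntegral_nonneg measurableSet_Ioo (fun u hu => hf_nonneg u hu.1)
  have hImono : ∀ t : ℝ, 0 < t → t ≤ z → I t ≤ I z := by
    intro t ht htz
    simp only [hIdef]
    apply MeasureTheory.setIntegral_mono_set (hint z hz)
    · filter_upwards [ae_restrict_mem measurableSet_Ioo] with u hu using hf_nonneg u hu.1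
    · exact HasSubset.Subset.eventuallyLE (Ioo_subset_Ioo le_rfl htz)
  set C : ℝ := σ / J + I z with hCdef
  clear_value C
  have hC : 0 < C := by
    have := hInonneg z hz
    have : (0:ℝ) < σ / J := by positivity
    rw [hCdef]
    have h0 : (0:ℝ) < σ / J := by positivity
    linarith [hInonneg z hz]
  have hFeq : ∀ u : ℝ, 0 < u → ψ u * u ^ (-b) = σ / J - I u := by
    intro u hu
    have := heq u hu
    simp only [hIdef]
    linarith [heq u hu]
  have hψ_bound : ∀ u : ℝ, 0 < u → u ≤ z → |ψ u| ≤ C * u ^ b := by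
    intro u hu huz
    have h1 : |ψ u * u ^ (-b)| ≤ C := by
      rw [hFeq u hu, abs_le]
      constructor
      · have h0 : (0:ℝ) < σ / J := by positivity
        have := hImono u hu huz
        have h2 := hInonneg u hu
        rw [hCdef]; linarith
      · have h0 : (0:ℝ) < σ / J := by positivity
        have := hInonneg u hu
        have hC2 : (0:ℝ) ≤ I z := hInonneg z hz
        rw [hCdef]; linarith
    have hpow : u ^ (-b) * u ^ b = 1 := by
      rw [← Real.rpow_add hu]; simp
    have h2 : |ψ u| = |ψ u * u ^ (-b)| * u ^ b := by
      rw [abs_mul, abs_of_nonneg (Real.rpow_nonneg hu.le (-b)), mul_assoc, hpow, mul_one]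
    rw [h2]
    exact mul_le_mul_of_nonneg_right h1 (Real.rpow_nonneg hu.le b)
  -- I bounded by C^2 t^{b+1}/(b+1)
  have hIbound : ∀ t : ℝ, 0 < t → t ≤ z → I t ≤ C ^ 2 * (t ^ (b + 1) / (b + 1)) := by
    intro t ht htz
    simp only [hIdef]
    have hle : (∫ u in Set.Ioo (0:ℝ) t, f u) ≤ ∫ u in Set.Ioo (0:ℝ) t, C ^ 2 * u ^ b := by
      apply MeasureTheory.setIntegral_mono_on (hint t ht)
        ((rpow_integrableOn hb ht).const_mul (C ^ 2)) measurableSet_Ioo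
      intro u hu
      simp only [hfdef]
      have hu0 : (0:ℝ) < u := hu.1
      have habs := hψ_bound u hu0 (le_of_lt (lt_of_lt_of_le hu.2 htz))
      have h1 : ψ u ^ 2 ≤ (C * u ^ b) ^ 2 := by
        have h2 := abs_le.mp habs
        nlinarith [h2.1, h2.2]
      have h3 : (0:ℝ) ≤ u ^ (-b) := Real.rpow_nonneg hu0.le _
      have h4 : (C * u ^ b) ^ 2 * u ^ (-b) = C ^ 2 * u ^ b := by
        rw [mul_pow, sq (u ^ b), mul_assoc, mul_assoc, ← Real.rpow_add hu0]
        norm_num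
      calc ψ u ^ 2 * u ^ (-b) ≤ (C * u ^ b) ^ 2 * u ^ (-b) :=
            mul_le_mul_of_nonneg_right h1 h3
        _ = C ^ 2 * u ^ b := h4
    rwa [MeasureTheory.integral_const_mul, integral_rpow_Ioo hb ht] at hle
  -- derivative of E
  have hE' : ∀ t : ℝ, 0 < t → HasDerivAt E (-(ψ t) * E t) t := by
    intro t ht
    have hD' : HasDerivAt D (t ^ b) t := by rw [hDdef]; exact hasDerivAt_D hb ht
    have h := (((hasDerivAt_const t (σ / J)).sub (hI' t ht)).mul hD').sub_const 1
    rw [hEdef]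
    refine h.congr_deriv ?_
    have hzb : (0:ℝ) < t ^ b := Real.rpow_pos_of_pos ht b
    simp only [hEdef, hfdef, hDdef, Pi.sub_apply]
    rw [← hFeq t ht, Real.rpow_neg ht.le]
    field_simp
    ring
  -- zero derivative of E * exp
  have hQ : ∀ t : ℝ, 0 < t →
      HasDerivAt (fun s => E s * Real.exp (∫ u in z..s, ψ u)) 0 t := by
    intro t ht
    have hψII : IntervalIntegrable ψ volume z t := by
      apply ContinuousOn.intervalIntegrable
      exact hcont.mono (fun x hx => lt_of_lt_of_le (lt_min hz ht) hx.1)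
    have hmeas := ContinuousOn.stronglyMeasurableAtFilter (μ := volume) isOpen_Ioi hcont t
      (by exact ht)
    have hca : ContinuousAt ψ t := hcont.continuousAt (isOpen_Ioi.mem_nhds ht)
    have hP : HasDerivAt (fun s => ∫ u in z..s, ψ u) (ψ t) t :=
      intervalIntegral.integral_hasDerivAt_right hψII hmeas hca
    have := (hE' t ht).mul hP.exp
    refine this.congr_deriv ?_
    ring
  -- constancy
  have hconst : ∀ t : ℝ, 0 < t → t ≤ z →
      E z = E t * Real.exp (∫ u in z..t, ψ u) := by
    intro t ht htz
    have key := constant_of_has_deriv_right_zero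
      (f := fun s => E s * Real.exp (∫ u in z..s, ψ u)) (a := t) (b := z)
      (fun s hs => ((hQ s (lt_of_lt_of_le ht hs.1)).continuousAt).continuousWithinAt)
      (fun s hs => ((hQ s (lt_of_lt_of_le ht hs.1)).hasDerivWithinAt))
    have h2 := key z ⟨htz, le_rfl⟩
    simp only [intervalIntegral.integral_same, Real.exp_zero, mul_one] at h2
    exact h2
  -- bound on E t
  set K : ℝ := (c⁻¹ + C ^ 2 * D z) / (b + 1) with hKdef
  clear_value K
  have hDz : (0:ℝ) < D z := by simp only [hDdef]; exact Dpos hb hc hz.le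
  have hEbound : ∀ t : ℝ, 0 < t → t ≤ z → |E t| ≤ K * t ^ (b + 1) := by
    intro t ht htz
    have hx : (0:ℝ) ≤ t ^ (b + 1) := Real.rpow_nonneg ht.le _
    have hEt : E t = c⁻¹ * (t ^ (b + 1) / (b + 1)) - I t * D t := by
      have hinv : σ / J = c⁻¹ := by rw [hcdef, inv_div]
      simp only [hEdef, hDdef, hinv]
      field_simp
      ring
    have ha1 : (0:ℝ) ≤ c⁻¹ * (t ^ (b + 1) / (b + 1)) := by positivity
    have hDt : (0:ℝ) < D t := by simp only [hDdef]; exact Dpos hb hc ht.le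
    have ha2 : (0:ℝ) ≤ I t * D t := mul_nonneg (hInonneg t ht) hDt.le
    have hDle : D t ≤ D z := by
      simp only [hDdef]
      have := Real.rpow_le_rpow ht.le htz (by linarith : (0:ℝ) ≤ b + 1)
      have hb1' : (0:ℝ) < b + 1 := hb1
      gcongr
    have ha3 : I t * D t ≤ C ^ 2 * (t ^ (b + 1) / (b + 1)) * D z :=
      mul_le_mul (hIbound t ht htz) hDle hDt.le (by positivity)
    have ha4 : (0:ℝ) ≤ C ^ 2 * (t ^ (b + 1) / (b + 1)) * D z := le_trans ha2 ha3
    rw [hEt, abs_le]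
    constructor
    · rw [hKdef]; rw [div_mul_eq_mul_div]
      have : (c⁻¹ + C ^ 2 * D z) * t ^ (b + 1) / (b + 1)
          = c⁻¹ * (t ^ (b + 1) / (b + 1)) + C ^ 2 * (t ^ (b + 1) / (b + 1)) * D z := by
        field_simp
      rw [this]
      linarith [ha1, ha2, ha3, ha4]
    · rw [hKdef]; rw [div_mul_eq_mul_div]
      have : (c⁻¹ + C ^ 2 * D z) * t ^ (b + 1) / (b + 1)
          = c⁻¹ * (t ^ (b + 1) / (b + 1)) + C ^ 2 * (t ^ (b + 1) / (b + 1)) * D z := by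
        field_simp
      rw [this]
      linarith [ha1, ha2, ha3, ha4]
  -- bound on the exponent
  have hexp : ∀ t : ℝ, 0 < t → t ≤ z →
      (∫ u in z..t, ψ u) ≤ C * (z ^ (b + 1) / (b + 1)) := by
    intro t ht htz
    rw [intervalIntegral.integral_symm]
    have h1 : |∫ u in t..z, ψ u| ≤ ∫ u in t..z, |ψ u| :=
      intervalIntegral.abs_integral_le_integral_abs htz
    have h2 : (∫ u in t..z, |ψ u|) ≤ ∫ u in t..z, C * u ^ b := by
      apply intervalIntegral.integral_mono_on htz
      · apply ContinuousOn.intervalIntegrable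
        apply ContinuousOn.abs
        apply hcont.mono
        intro x hx
        rw [Set.uIcc_of_le htz] at hx
        exact lt_of_lt_of_le ht hx.1
      · exact (intervalIntegral.intervalIntegrable_rpow' hb).const_mul C
      · intro u hu
        exact hψ_bound u (lt_of_lt_of_le ht hu.1) hu.2
    have h3 : (∫ u in t..z, C * u ^ b) = C * ((z ^ (b + 1) - t ^ (b + 1)) / (b + 1)) := by
      rw [intervalIntegral.integral_const_mul, integral_rpow (Or.inl hb)]
    have h4 : C * ((z ^ (b + 1) - t ^ (b + 1)) / (b + 1)) ≤ C * (z ^ (b + 1) / (b + 1)) := by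
      have hx : (0:ℝ) ≤ t ^ (b + 1) := Real.rpow_nonneg ht.le _
      apply mul_le_mul_of_nonneg_left _ hC.le
      exact (div_le_div_iff_of_pos_right hb1).mpr (by linarith)
    have h0 : -(∫ u in t..z, ψ u) ≤ |∫ u in t..z, ψ u| := neg_le_abs _
    linarith
  -- conclusion
  set M : ℝ := K * Real.exp (C * (z ^ (b + 1) / (b + 1))) with hMdef
  clear_value M
  have hfinal : ∀ t : ℝ, 0 < t → t ≤ z → |E z| ≤ M * t ^ (b + 1) := by
    intro t ht htz
    have h1 := hconst t ht htz
    have h2 : |E z| = |E t| * Real.exp (∫ u in z..t, ψ u) := by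
      rw [h1, abs_mul, abs_of_pos (Real.exp_pos _)]
    have h3 : Real.exp (∫ u in z..t, ψ u) ≤ Real.exp (C * (z ^ (b + 1) / (b + 1))) :=
      Real.exp_le_exp.mpr (hexp t ht htz)
    have h4 := hEbound t ht htz
    have h5 : (0:ℝ) ≤ K * t ^ (b + 1) := le_trans (abs_nonneg _) h4
    calc |E z| = |E t| * Real.exp (∫ u in z..t, ψ u) := h2
      _ ≤ (K * t ^ (b + 1)) * Real.exp (C * (z ^ (b + 1) / (b + 1))) :=
          mul_le_mul h4 h3 (Real.exp_pos _).le h5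
      _ = M * t ^ (b + 1) := by rw [hMdef]; ring
  have hlim : Tendsto (fun t : ℝ => M * t ^ (b + 1)) (𝓝[>] (0:ℝ)) (𝓝 0) := by
    have h1 : ContinuousAt (fun t : ℝ => t ^ (b + 1)) 0 :=
      Real.continuousAt_rpow_const 0 (b + 1) (Or.inr hb1.le)
    have h2 : Tendsto (fun t : ℝ => t ^ (b + 1)) (𝓝 (0:ℝ)) (𝓝 0) := by
      have := h1.tendsto
      rwa [Real.zero_rpow hb1.ne'] at this
    have h3 : Tendsto (fun t : ℝ => M * t ^ (b + 1)) (𝓝[>] (0:ℝ)) (𝓝 (M * 0)) :=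
      (h2.const_mul M).mono_left nhdsWithin_le_nhds
    simpa using h3
  have hle0 : |E z| ≤ 0 := by
    apply ge_of_tendsto hlim
    filter_upwards [Ioc_mem_nhdsGT hz] with t ht
    exact hfinal t ht.1 ht.2
  have hEz : E z = 0 := abs_nonpos_iff.mp hle0
  have hFz := hFeq z hz
  simp only [hEdef, hDdef] at hEz
  rw [← hFz] at hEz
  linarith

lemma integral_phi_eq {b c : ℝ} (hb : -1 < b) (hc : 0 < c) {y z : ℝ} (hy : 0 < y)
    (hyz : y ≤ z) :
    ∫ u in y..z, u ^ b / (c + u ^ (b + 1) / (b + 1))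
      = Real.log (c + z ^ (b + 1) / (b + 1)) - Real.log (c + y ^ (b + 1) / (b + 1)) := by
  apply intervalIntegral.integral_eq_sub_of_hasDerivAt
  · intro x hx
    rw [Set.uIcc_of_le hyz] at hx
    have hx0 : 0 < x := lt_of_lt_of_le hy hx.1
    exact (hasDerivAt_D (c := c) hb hx0).log (Dpos hb hc hx0.le).ne'
  · apply ContinuousOn.intervalIntegrable
    apply (contOn_phi hb hc).mono
    intro x hx
    rw [Set.uIcc_of_le hyz] at hx
    exact lt_of_lt_of_le hy hx.1

/-- `φ z = z^b/(Ĵ/σ + z^{b+1}/(b+1))` is the unique continuous solution on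
`(0,∞)` of `φ(z) z^{-b} + ∫₀^z φ(u)² u^{-b} du = σ/Ĵ`, and consequently
`exp(−∫_y^z φ) = (1 + σĴ⁻¹ y^{b+1}/(b+1))/(1 + σĴ⁻¹ z^{b+1}/(b+1))` for `0 < y < z`. -/
theorem upcrossing_scaling_phi (b σ J : ℝ) (hb : -1 < b) (hσ : 0 < σ) (hJ : 0 < J)
    (φ : ℝ → ℝ) (hφ : ∀ z, φ z = z ^ b / (J / σ + z ^ (b + 1) / (b + 1))) :
    (ContinuousOn φ (Set.Ioi 0) ∧
      (∀ z > (0:ℝ), IntegrableOn (fun u => φ u ^ 2 * u ^ (-b)) (Set.Ioo 0 z) volume) ∧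
      (∀ z > (0:ℝ), φ z * z ^ (-b) + ∫ u in Set.Ioo (0:ℝ) z, φ u ^ 2 * u ^ (-b) = σ / J)) ∧
    (∀ ψ : ℝ → ℝ, ContinuousOn ψ (Set.Ioi 0) →
      (∀ z > (0:ℝ), IntegrableOn (fun u => ψ u ^ 2 * u ^ (-b)) (Set.Ioo 0 z) volume) →
      (∀ z > (0:ℝ), ψ z * z ^ (-b) + ∫ u in Set.Ioo (0:ℝ) z, ψ u ^ 2 * u ^ (-b) = σ / J) →
      ∀ z > (0:ℝ), ψ z = φ z) ∧
    (∀ y z : ℝ, 0 < y → y < z →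
      Real.exp (-(∫ u in y..z, φ u)) =
        (1 + σ / J * (y ^ (b + 1) / (b + 1))) / (1 + σ / J * (z ^ (b + 1) / (b + 1)))) := by
  have hb1 : (0:ℝ) < b + 1 := by linarith
  have hc : (0:ℝ) < J / σ := by positivity
  have hφf : φ = fun z => z ^ b / (J / σ + z ^ (b + 1) / (b + 1)) := funext hφ
  have hEqOn : ∀ z : ℝ, 0 < z → Set.EqOn (fun u => φ u ^ 2 * u ^ (-b))
      (fun u : ℝ => u ^ b / (J / σ + u ^ (b + 1) / (b + 1)) ^ 2) (Set.Ioo 0 z) := by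
    intro z hz u hu
    simp only
    rw [hφ u]
    exact integrand_eq hb hc hu.1
  refine ⟨⟨?_, ?_, ?_⟩, ?_, ?_⟩
  · rw [hφf]; exact contOn_phi hb hc
  · intro z hz
    exact (g_integrableOn hb hc hz).congr_fun (fun u hu => (hEqOn z hz hu).symm)
      measurableSet_Ioo
  · intro z hz
    have hDz := Dpos (z := z) hb hc hz.le
    have hzb := Real.rpow_pos_of_pos hz b
    rw [MeasureTheory.setIntegral_congr_fun measurableSet_Ioo (hEqOn z hz),
      g_integral hb hc hz, hφ z, Real.rpow_neg hz.le, inv_div]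
    field_simp
    ring
  · intro ψ h1 h2 h3 z hz
    have h := uniq_aux b σ J hb hσ hJ ψ h1 h2 h3 z hz
    have hDz := Dpos (z := z) hb hc hz.le
    have hzb := Real.rpow_pos_of_pos hz b
    rw [Real.rpow_neg hz.le] at h
    rw [hφ z, eq_div_iff hDz.ne']
    field_simp at h ⊢
    linarith [h]
  · intro y z hy hyz
    have hDy := Dpos (z := y) hb hc hy.le
    have hDz := Dpos (z := z) hb hc (hy.trans hyz).le
    have hRy : (0:ℝ) < 1 + σ / J * (y ^ (b + 1) / (b + 1)) := by
      have := Real.rpow_nonneg hy.le (b + 1); positivity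
    have hRz : (0:ℝ) < 1 + σ / J * (z ^ (b + 1) / (b + 1)) := by
      have := Real.rpow_nonneg (hy.trans hyz).le (b + 1); positivity
    rw [hφf, integral_phi_eq hb hc hy hyz.le, neg_sub, Real.exp_sub,
      Real.exp_log hDy, Real.exp_log hDz, div_eq_div_iff hDz.ne' hRz.ne']
    field_simp
end

section
/- Let ν̂ be a measure on (0,∞) with 0 < ν̂([x,∞)) < ∞ for all x > 0. Suppose for all 0 < y < z the Laplace transform (ν̂([z,∞))/ν̂([y,∞))) · (ν̂([y,∞)) + σ)/(ν̂([z,∞)) + σ) equals (1 + σ Ĵ^{−1} q(y))/(1 + σ Ĵ^{−1} q(z)) for all σ ≥ 0, where q(x) = x^{b+1}/(b+1), Ĵ = J/(2Γ(b+1)), b > −1, J > 0. Then ν̂([x,∞)) = Ĵ/q(x) = J(b+1)/(2Γ(b+1) x^{b+1}) for all x > 0; equivalently dν̂(x) = (J(b+1)/(2Γ(b+1))) x^{−(b+2)} dx. -/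
open Set Filter MeasureTheory Real

/-- if the Laplace transforms `(ν[z,∞)/ν[y,∞))(ν[y,∞)+σ)/(ν[z,∞)+σ)`
match `(1 + σJhat⁻¹q(y))/(1 + σJhat⁻¹q(z))` with `q x = x^{b+1}/(b+1)`, `Jhat = J/(2Γ(b+1))`,
for all `0 < y < z` and `σ ≥ 0`, then `ν[x,∞) = Jhat/q(x) = J(b+1)/(2Γ(b+1)x^{b+1})`. -/
theorem spike_intensity_from_laplace (b J : ℝ) (hb : -1 < b) (hJ : 0 < J)
    (ν : Measure ℝ)
    (hfin : ∀ x > (0:ℝ), ν (Set.Ici x) < ⊤) (hpos : ∀ x > (0:ℝ), 0 < ν (Set.Ici x))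
    (q : ℝ → ℝ) (hq : ∀ x, q x = x ^ (b + 1) / (b + 1))
    (Jhat : ℝ) (hJhat : Jhat = J / (2 * Real.Gamma (b + 1)))
    (hmatch : ∀ y z σ : ℝ, 0 < y → y < z → 0 ≤ σ →
      (ν (Set.Ici z)).toReal / (ν (Set.Ici y)).toReal *
          (((ν (Set.Ici y)).toReal + σ) / ((ν (Set.Ici z)).toReal + σ))
        = (1 + σ / Jhat * q y) / (1 + σ / Jhat * q z)) :
    ∀ x > (0:ℝ),
      (ν (Set.Ici x)).toReal = Jhat / q x ∧
      (ν (Set.Ici x)).toReal = J * (b + 1) / (2 * Real.Gamma (b + 1) * x ^ (b + 1)) := by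
  intro x hx
  have hb1 : (0:ℝ) < b + 1 := by linarith
  have hΓ : 0 < Real.Gamma (b + 1) := Real.Gamma_pos_of_pos hb1
  have hK : 0 < Jhat := by rw [hJhat]; positivity
  have hz : (0:ℝ) < x + 1 := by linarith
  have ha : 0 < (ν (Set.Ici x)).toReal :=
    ENNReal.toReal_pos (hpos x hx).ne' (hfin x hx).ne
  have hc : 0 < (ν (Set.Ici (x + 1))).toReal :=
    ENNReal.toReal_pos (hpos (x + 1) hz).ne' (hfin (x + 1) hz).ne
  set a := (ν (Set.Ici x)).toReal with ha_def
  set c := (ν (Set.Ici (x + 1))).toReal with hc_def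
  have hxp : (0:ℝ) < x ^ (b + 1) := Real.rpow_pos_of_pos hx _
  have hzp : (0:ℝ) < (x + 1) ^ (b + 1) := Real.rpow_pos_of_pos hz _
  have hp : 0 < q x := by rw [hq]; positivity
  have hr : 0 < q (x + 1) := by rw [hq]; positivity
  have hpr : q x < q (x + 1) := by
    rw [hq, hq]
    exact div_lt_div_of_pos_right (Real.rpow_lt_rpow hx.le (by linarith) hb1) hb1
  have E1 := hmatch x (x + 1) 1 hx (by linarith) zero_le_one
  have E2 := hmatch x (x + 1) 2 hx (by linarith) (by norm_num)
  have hd1 : (0:ℝ) < 1 + 1 / Jhat * q (x + 1) := by positivity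
  have hd2 : (0:ℝ) < 1 + 2 / Jhat * q (x + 1) := by positivity
  have key : a * q x = Jhat := by
    rw [← ha_def, ← hc_def] at E1 E2
    field_simp [ha.ne', hc.ne'] at E1 E2
    have h5 : c * q (x + 1) = a * q x := by linear_combination (E2 - 2 * E1) / 2
    have hac : a ≠ c := by
      intro h
      rw [h] at h5
      have : q (x + 1) = q x := by
        exact mul_left_cancel₀ hc.ne' h5
      linarith
    have h6 : (a * q x - Jhat) * (a - c) = 0 := by
      linear_combination E1 - (a + 1) * h5
    rcases mul_eq_zero.mp h6 with h | h
    · linarith [sub_eq_zero.mp h]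
    · exact absurd (sub_eq_zero.mp h) hac
  have h1 : a = Jhat / q x := (eq_div_iff hp.ne').mpr key
  refine ⟨h1, ?_⟩
  rw [h1, hq, hJhat]
  rw [div_div_div_eq]
end

section
/- Let b > 0 and ε > 0 and define Z_ε = ∫₀^∞ u^{−4} exp(b/(2u²) − ε/(3u³)) du. Then Z_ε is finite, and as ε → 0⁺ one has the Laplace-type asymptotics Z_ε ∼ √(2πb³) · ε^{−2} · e^{b³/(6ε²)}. Equivalently, after the substitution u = ε/s, Z_ε = ε^{−3} ∫₀^∞ s² exp((bs²/2 − s³/3)/ε²) ds, and this integral is governed by the saddle point at s = b where bs²/2 − s³/3 attains its maximum b³/6 on (0,∞). -/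
open Set Filter MeasureTheory Real

private lemma pfa_integrable_h (b ε : ℝ) (hb : 0 < b) (hε : 0 < ε) :
    IntegrableOn (fun s : ℝ => s ^ 2 * Real.exp ((b * s ^ 2 / 2 - s ^ 3 / 3) / ε ^ 2))
      (Ioi 0) volume := by
  have hε2 : (0:ℝ) < ε ^ 2 := by positivity
  have ha : (0:ℝ) < b / (6 * ε ^ 2) := by positivity
  have hcont : Continuous (fun s : ℝ => s ^ 2 * Real.exp ((b * s ^ 2 / 2 - s ^ 3 / 3) / ε ^ 2)) := by
    fun_prop
  rw [show Ioi (0:ℝ) = Ioc 0 (2*b) ∪ Ioi (2*b) from (Ioc_union_Ioi_eq_Ioi (by linarith)).symm]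
  apply IntegrableOn.union
  · exact hcont.integrableOn_Ioc
  · have hint : Integrable (fun t : ℝ => t ^ 2 * Real.exp (-(b / (6 * ε ^ 2)) * t ^ 2)) := by
      have := integrable_rpow_mul_exp_neg_mul_sq ha (show (-1:ℝ) < 2 by norm_num)
      refine this.congr (Eventually.of_forall fun x => ?_)
      norm_cast
    apply Integrable.mono' hint.integrableOn hcont.aestronglyMeasurable.restrict
    filter_upwards [ae_restrict_mem measurableSet_Ioi] with s hs
    have hs' : 2*b < s := hs
    have h1 : (b * s ^ 2 / 2 - s ^ 3 / 3) / ε ^ 2 ≤ -(b / (6 * ε ^ 2)) * s ^ 2 := by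
      rw [div_le_iff₀ hε2]
      have h0 : b * s ^ 2 / 2 - s ^ 3 / 3 ≤ -(b/6) * s^2 := by nlinarith [sq_nonneg s]
      calc b * s ^ 2 / 2 - s ^ 3 / 3 ≤ -(b/6) * s^2 := h0
        _ = -(b / (6 * ε ^ 2)) * s ^ 2 * ε ^ 2 := by field_simp
    rw [Real.norm_eq_abs, abs_mul, abs_of_nonneg (Real.exp_pos _).le, abs_of_nonneg (sq_nonneg s)]
    exact mul_le_mul_of_nonneg_left (Real.exp_le_exp.mpr h1) (sq_nonneg s)

private lemma pfa_img1 (ε : ℝ) (hε : 0 < ε) : (fun s : ℝ => ε / s) '' Ioi 0 = Ioi 0 := by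
  ext u
  simp only [mem_image, mem_Ioi]
  constructor
  · rintro ⟨s, hs, rfl⟩; positivity
  · intro hu; exact ⟨ε / u, by positivity, by field_simp⟩

private lemma pfa_deriv1 (ε : ℝ) : ∀ s ∈ Ioi (0:ℝ),
    HasDerivWithinAt (fun s : ℝ => ε / s) (-(ε / s ^ 2)) (Ioi 0) s := by
  intro s hs
  have hs0 : s ≠ 0 := ne_of_gt hs
  have h1 : HasDerivAt (fun s : ℝ => ε / s) (-(ε / s ^ 2)) s := by
    simpa [div_eq_mul_inv, mul_comm] using ((hasDerivAt_inv hs0).const_mul ε)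
  exact h1.hasDerivWithinAt

private lemma pfa_inj1 (ε : ℝ) (hε : 0 < ε) : InjOn (fun s : ℝ => ε / s) (Ioi 0) := by
  intro x hx y hy h
  have hx0 : x ≠ 0 := ne_of_gt hx
  have hy0 : y ≠ 0 := ne_of_gt hy
  field_simp at h
  exact h.symm

private lemma pfa_pointwise1 (b ε : ℝ) (hε : 0 < ε) : ∀ s ∈ Ioi (0:ℝ),
    |(-(ε / s ^ 2))| • (((ε/s) ^ 4)⁻¹ * Real.exp (b / (2 * (ε/s) ^ 2) - ε / (3 * (ε/s) ^ 3)))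
      = ε⁻¹ ^ 3 * (s ^ 2 * Real.exp ((b * s ^ 2 / 2 - s ^ 3 / 3) / ε ^ 2)) := by
  intro s hs
  have hs0 : (0:ℝ) < s := hs
  have harg : b / (2 * (ε/s) ^ 2) - ε / (3 * (ε/s) ^ 3) = (b * s ^ 2 / 2 - s ^ 3 / 3) / ε ^ 2 := by
    field_simp
  rw [harg, smul_eq_mul, abs_neg, abs_of_pos (by positivity)]
  field_simp

private lemma pfa_cov1 (b ε : ℝ) (hb : 0 < b) (hε : 0 < ε) :
    (IntegrableOn (fun u : ℝ => ((u:ℝ) ^ 4)⁻¹ * Real.exp (b / (2 * u ^ 2) - ε / (3 * u ^ 3))) (Ioi 0) volume) ∧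
    (∫ u in Ioi (0:ℝ), (u ^ 4)⁻¹ * Real.exp (b / (2 * u ^ 2) - ε / (3 * u ^ 3)))
      = ε⁻¹ ^ 3 * ∫ s in Ioi (0:ℝ), s ^ 2 * Real.exp ((b * s ^ 2 / 2 - s ^ 3 / 3) / ε ^ 2) := by
  have key := integral_image_eq_integral_abs_deriv_smul (f' := fun s => -(ε / s ^ 2))
    measurableSet_Ioi (pfa_deriv1 ε) (pfa_inj1 ε hε)
    (fun u : ℝ => (u ^ 4)⁻¹ * Real.exp (b / (2 * u ^ 2) - ε / (3 * u ^ 3)))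
  have keyi := integrableOn_image_iff_integrableOn_abs_deriv_smul (f' := fun s => -(ε / s ^ 2))
    measurableSet_Ioi (pfa_deriv1 ε) (pfa_inj1 ε hε)
    (fun u : ℝ => (u ^ 4)⁻¹ * Real.exp (b / (2 * u ^ 2) - ε / (3 * u ^ 3)))
  rw [pfa_img1 ε hε] at key keyi
  constructor
  · rw [keyi, integrableOn_congr_fun (pfa_pointwise1 b ε hε) measurableSet_Ioi]
    exact (pfa_integrable_h b ε hb hε).const_mul _
  · rw [key, setIntegral_congr_fun measurableSet_Ioi (pfa_pointwise1 b ε hε), integral_const_mul]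

private lemma pfa_img2 (b ε : ℝ) (hε : 0 < ε) :
    (fun t : ℝ => b + ε * t) '' Ioi (-(b/ε)) = Ioi 0 := by
  ext u
  simp only [mem_image, mem_Ioi]
  constructor
  · rintro ⟨t, ht, rfl⟩
    have h0 : ε * (-(b/ε)) < ε * t := mul_lt_mul_of_pos_left ht hε
    rw [mul_neg, mul_div_cancel₀ _ (ne_of_gt hε)] at h0
    linarith
  · intro hu
    refine ⟨(u - b)/ε, ?_, by field_simp; ring⟩
    rw [neg_lt, ← neg_div, div_lt_div_iff_of_pos_right] <;> linarith

private lemma pfa_cov2 (b ε : ℝ) (hb : 0 < b) (hε : 0 < ε) :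
    (∫ s in Ioi (0:ℝ), s ^ 2 * Real.exp ((b * s ^ 2 / 2 - s ^ 3 / 3) / ε ^ 2))
      = ε * Real.exp (b ^ 3 / (6 * ε ^ 2)) *
        ∫ t, Set.indicator (Ioi (-(b/ε)))
          (fun t : ℝ => (b + ε * t) ^ 2 * Real.exp (-(t ^ 2 * (3 * b + 2 * ε * t)) / 6)) t := by
  rw [MeasureTheory.integral_indicator measurableSet_Ioi]
  have hderiv : ∀ t ∈ Ioi (-(b/ε)), HasDerivWithinAt (fun t : ℝ => b + ε * t) ε (Ioi (-(b/ε))) t := by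
    intro t ht
    have h0 : HasDerivAt (fun t : ℝ => b + ε * t) ε t := by
      simpa using ((hasDerivAt_id t).const_mul ε).const_add b
    exact h0.hasDerivWithinAt
  have hinj : InjOn (fun t : ℝ => b + ε * t) (Ioi (-(b/ε))) := by
    intro x _ y _ h
    simp only [add_right_inj] at h
    exact mul_left_cancel₀ (ne_of_gt hε) h
  have key := integral_image_eq_integral_abs_deriv_smul (f' := fun _ => ε)
    measurableSet_Ioi hderiv hinj
    (fun s : ℝ => s ^ 2 * Real.exp ((b * s ^ 2 / 2 - s ^ 3 / 3) / ε ^ 2))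
  rw [pfa_img2 b ε hε] at key
  rw [key, ← integral_const_mul]
  apply setIntegral_congr_fun measurableSet_Ioi
  intro t ht
  have harg : (b * (b + ε*t) ^ 2 / 2 - (b + ε*t) ^ 3 / 3) / ε ^ 2
      = b ^ 3 / (6 * ε ^ 2) + -(t ^ 2 * (3 * b + 2 * ε * t)) / 6 := by
    field_simp
    ring
  simp only [smul_eq_mul, abs_of_pos hε, harg, Real.exp_add]
  ring

private lemma pfa_dct (b : ℝ) (hb : 0 < b) :
    Tendsto (fun ε : ℝ => ∫ t, Set.indicator (Ioi (-(b/ε)))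
        (fun t : ℝ => (b + ε * t) ^ 2 * Real.exp (-(t ^ 2 * (3 * b + 2 * ε * t)) / 6)) t)
      (nhdsWithin 0 (Ioi 0)) (nhds (∫ t : ℝ, b ^ 2 * Real.exp (-(b/2) * t ^ 2))) := by
  have hb6 : (0:ℝ) < b/6 := by linarith
  apply tendsto_integral_filter_of_dominated_convergence
    (bound := fun t : ℝ => (2 * b ^ 2 + 2 * t ^ 2) * Real.exp (-(b/6) * t ^ 2))
  · refine Eventually.of_forall fun ε => ?_
    exact ((Continuous.aestronglyMeasurable (by fun_prop)).indicator measurableSet_Ioi)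
  · filter_upwards [Ioc_mem_nhdsGT_of_mem (show (0:ℝ) ∈ Ico 0 1 by norm_num)] with ε hε
    refine Eventually.of_forall fun t => ?_
    obtain ⟨hε0, hε1⟩ := hε
    by_cases ht : t ∈ Ioi (-(b/ε))
    · rw [Set.indicator_of_mem ht]
      have hbt : -b < ε * t := by
        have h0 := mul_lt_mul_of_pos_left (mem_Ioi.mp ht) hε0
        rw [mul_neg, mul_div_cancel₀ _ (ne_of_gt hε0)] at h0
        linarith
      have hsq : (b + ε * t) ^ 2 ≤ 2 * b ^ 2 + 2 * t ^ 2 := by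
        have hε2 : ε^2 ≤ 1 := by nlinarith
        have h1 : ε^2 * t^2 ≤ t^2 := by nlinarith [sq_nonneg t]
        nlinarith [sq_nonneg (b - ε * t)]
      have hexp : Real.exp (-(t ^ 2 * (3 * b + 2 * ε * t)) / 6) ≤ Real.exp (-(b/6) * t ^ 2) := by
        apply Real.exp_le_exp.mpr
        nlinarith [sq_nonneg t]
      rw [Real.norm_eq_abs, abs_mul, abs_of_nonneg (Real.exp_pos _).le, abs_of_nonneg (sq_nonneg _)]
      exact mul_le_mul hsq hexp (Real.exp_pos _).le (by positivity)
    · rw [Set.indicator_of_notMem ht]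
      simp only [norm_zero]
      positivity
  · have h1 : Integrable (fun t : ℝ => t ^ 2 * Real.exp (-(b/6) * t ^ 2)) := by
      have := integrable_rpow_mul_exp_neg_mul_sq hb6 (show (-1:ℝ) < 2 by norm_num)
      refine this.congr (Eventually.of_forall fun x => ?_)
      norm_cast
    have h2 := ((integrable_exp_neg_mul_sq hb6).const_mul (2 * b ^ 2)).add (h1.const_mul 2)
    refine h2.congr (Eventually.of_forall fun t => ?_)
    simp only [Pi.add_apply]
    ring
  · refine Eventually.of_forall fun t => ?_
    have hc : Continuous (fun ε : ℝ => (b + ε * t) ^ 2 * Real.exp (-(t ^ 2 * (3 * b + 2 * ε * t)) / 6)) := by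
      fun_prop
    have h0 := (hc.tendsto 0).mono_left (nhdsWithin_le_nhds :
      nhdsWithin (0:ℝ) (Ioi 0) ≤ nhds 0)
    have hval : (b + 0 * t) ^ 2 * Real.exp (-(t ^ 2 * (3 * b + 2 * 0 * t)) / 6)
        = b ^ 2 * Real.exp (-(b/2) * t ^ 2) := by
      norm_num
      left
      ring
    rw [hval] at h0
    apply h0.congr'
    have hδ : (0:ℝ) < b / (1 + |t|) := by positivity
    filter_upwards [Ioo_mem_nhdsGT_of_mem (show (0:ℝ) ∈ Ico 0 (b / (1 + |t|)) by
      constructor <;> simp [hδ.le, hδ])] with ε hε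
    obtain ⟨hε0, hε1⟩ := hε
    have htmem : t ∈ Ioi (-(b/ε)) := by
      rw [mem_Ioi, neg_lt, lt_div_iff₀ hε0]
      have h2 : ε * (1 + |t|) < b := (lt_div_iff₀ (by positivity)).mp hε1
      nlinarith [neg_le_abs t, abs_nonneg t, hε0]
    rw [Set.indicator_of_mem htmem]

private lemma pfa_gauss (b : ℝ) (hb : 0 < b) :
    ∫ t : ℝ, b ^ 2 * Real.exp (-(b/2) * t ^ 2) = Real.sqrt (2 * π * b ^ 3) := by
  rw [MeasureTheory.integral_const_mul, integral_gaussian]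
  rw [show b ^ 2 = Real.sqrt ((b^2)^2) by rw [Real.sqrt_sq (sq_nonneg b)]]
  rw [← Real.sqrt_mul (by positivity)]
  congr 1
  field_simp

/-- the partition function `Z ε = ∫₀^∞ u⁻⁴ e^{b/(2u²) − ε/(3u³)} du`
is finite for `ε > 0`, equals `ε⁻³ ∫₀^∞ s² e^{(bs²/2 − s³/3)/ε²} ds` (substitution
`u = ε/s`), satisfies the Laplace/saddle-point asymptotics
`Z ε ∼ √(2πb³) ε⁻² e^{b³/(6ε²)}` as `ε → 0⁺`, and the exponent `bs²/2 − s³/3`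
attains its maximum `b³/6` on `(0,∞)` at the saddle point `s = b`. -/
theorem partition_function_asymptotics (b : ℝ) (hb : 0 < b)
    (Z : ℝ → ℝ)
    (hZ : ∀ ε, Z ε = ∫ u in Set.Ioi (0:ℝ),
      (u ^ 4)⁻¹ * Real.exp (b / (2 * u ^ 2) - ε / (3 * u ^ 3))) :
    (∀ ε > (0:ℝ), IntegrableOn
      (fun u => (u ^ 4)⁻¹ * Real.exp (b / (2 * u ^ 2) - ε / (3 * u ^ 3)))
      (Set.Ioi 0) volume) ∧
    (∀ ε > (0:ℝ), Z ε = ε⁻¹ ^ 3 *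
      ∫ s in Set.Ioi (0:ℝ), s ^ 2 * Real.exp ((b * s ^ 2 / 2 - s ^ 3 / 3) / ε ^ 2)) ∧
    Tendsto (fun ε => Z ε / (Real.sqrt (2 * π * b ^ 3) * ε⁻¹ ^ 2 * Real.exp (b ^ 3 / (6 * ε ^ 2))))
      (nhdsWithin 0 (Set.Ioi 0)) (nhds 1) ∧
    (IsMaxOn (fun s => b * s ^ 2 / 2 - s ^ 3 / 3) (Set.Ioi 0) b ∧
      b * b ^ 2 / 2 - b ^ 3 / 3 = b ^ 3 / 6) := by
  have hc : (0:ℝ) < Real.sqrt (2 * π * b ^ 3) :=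
    Real.sqrt_pos.mpr (by positivity)
  refine ⟨fun ε hε => (pfa_cov1 b ε hb hε).1,
    fun ε hε => by rw [hZ ε, (pfa_cov1 b ε hb hε).2], ?_, ?_, by ring⟩
  · have hlim := pfa_dct b hb
    rw [pfa_gauss b hb] at hlim
    have h2 := hlim.div_const (Real.sqrt (2 * π * b ^ 3))
    rw [div_self hc.ne'] at h2
    apply h2.congr'
    filter_upwards [self_mem_nhdsWithin] with ε (hε : ε ∈ Ioi (0:ℝ))
    have hε0 : (0:ℝ) < ε := hε
    rw [hZ ε, (pfa_cov1 b ε hb hε0).2, pfa_cov2 b ε hb hε0]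
    have he : Real.exp (b ^ 3 / (6 * ε ^ 2)) ≠ 0 := (Real.exp_pos _).ne'
    field_simp
    ring
  · intro x hx
    have hx0 : (0:ℝ) < x := hx
    simp only [mem_setOf_eq]
    nlinarith [mul_nonneg (sq_nonneg (x - b)) (by linarith : (0:ℝ) ≤ 2*x + b)]
end
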